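/- arXiv:1705.05564 — 7 statements merged into one kernel-verified Lean document; each statement's English description precedes it below -/
import Mathlib

section
/- Let A be a finite or countable alphabet, θ a bijective literal (anti)morphism on A*, X a finite θ-invariant subset of A*, and Y the minimal generating set of the smallest θ-invariant free submonoid of A* containing X. If X is not a code, then |Y| ≤ |X| − 1. -/
open List

variable {α : Type*}

/-- The submonoid (as a set) generated by `X`: all concatenations of words of `X`. -/
def StarSet (X : Set (List α)) : Set (List α) :=
  {w | ∃ l : List (List α), (∀ u ∈ l, u ∈ X) ∧ l.flatten = w}

/-- `X` is a (variable-length) code: unique factorization over `X`. -/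
def IsCode (X : Set (List α)) : Prop :=
  ∀ l m : List (List α), (∀ u ∈ l, u ∈ X) → (∀ u ∈ m, u ∈ X) →
    l.flatten = m.flatten → l = m

def Factor (u w : List α) : Prop := ∃ p s, p ++ u ++ s = w

def Factors (S : Set (List α)) : Set (List α) := {u | ∃ w ∈ S, Factor u w}

def Complete (X : Set (List α)) : Prop := Factors (StarSet X) = Set.univ

def Thin (X : Set (List α)) : Prop := Factors X ≠ Set.univ

def Invariant (θ : List α → List α) (X : Set (List α)) : Prop := θ '' X = X

def IsSubmonoidSet (M : Set (List α)) : Prop :=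
  [] ∈ M ∧ ∀ u ∈ M, ∀ v ∈ M, u ++ v ∈ M

/-- Stability (equidivisibility) condition, characterizing free submonoids of `A*`. -/
def Stable (M : Set (List α)) : Prop :=
  ∀ u v w, u ∈ M → u ++ v ∈ M → w ∈ M → v ++ w ∈ M → v ∈ M

def FreeSubmonoid (M : Set (List α)) : Prop := IsSubmonoidSet M ∧ Stable M

/-- Minimal generating set of a submonoid: `(M \ {ε}) \ (M \ {ε})²`. -/
def MinGen (M : Set (List α)) : Set (List α) :=
  {w | w ∈ M ∧ w ≠ [] ∧
    ¬ ∃ u v, u ∈ M ∧ v ∈ M ∧ u ≠ [] ∧ v ≠ [] ∧ u ++ v = w}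

def IsMorphism (θ : List α → List α) : Prop :=
  ∀ u v, θ (u ++ v) = θ u ++ θ v

def IsAntimorphism (θ : List α → List α) : Prop :=
  θ [] = [] ∧ ∀ u v, θ (u ++ v) = θ v ++ θ u

/-- `θ` is literal: the image of a letter is a letter. -/
def Literal (θ : List α → List α) : Prop := ∀ a : α, ∃ b : α, θ [a] = [b]

/-- `θ` is a bijective literal (anti)morphism of the free monoid. -/
def LitAnti (θ : List α → List α) : Prop :=
  Function.Bijective θ ∧ Literal θ ∧ (IsMorphism θ ∨ IsAntimorphism θ)

/-- The set `{θ^i z : i ∈ ℤ}` for a bijective `θ` (negative powers are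
captured by `θ^[i] w = z`). -/
def OrbitZ (θ : List α → List α) (z : List α) : Set (List α) :=
  {w | ∃ i : ℕ, θ^[i] z = w ∨ θ^[i] w = z}

def IsPrefixCode (X : Set (List α)) : Prop :=
  [] ∉ X ∧ ∀ x ∈ X, ∀ u, x ++ u ∈ X → u = []

def IsSuffixCode (X : Set (List α)) : Prop :=
  [] ∉ X ∧ ∀ x ∈ X, ∀ u, u ++ x ∈ X → u = []

/-- `X^k`: products of exactly `k` words of `X`. -/
def PowSet (X : Set (List α)) (k : ℕ) : Set (List α) :=
  {w | ∃ l : List (List α), l.length = k ∧ (∀ u ∈ l, u ∈ X) ∧ l.flatten = w}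

/-- Circular code: `x₁⋯xₘ = s·y₂⋯yₙ·p` with `y₁ = ps ∈ X`, `s ≠ ε`
forces `m = n`, `p = ε` and `xᵢ = yᵢ`. -/
def IsCircularCode (X : Set (List α)) : Prop :=
  ∀ (l ys : List (List α)) (p s : List α),
    (∀ u ∈ l, u ∈ X) → p ++ s ∈ X → (∀ u ∈ ys, u ∈ X) → s ≠ [] →
    l.flatten = s ++ ys.flatten ++ p → l = (p ++ s) :: ys ∧ p = []

/-- A word is overlapping-free if no proper nonempty prefix equals a suffix. -/
def OverlapFree (w : List α) : Prop :=
  ¬ ∃ u v : List α, u ≠ [] ∧ u.length ≤ w.length - 1 ∧ u ++ w = w ++ v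

/-- `X` is a regular (rational) language: accepted by a finite automaton. -/
def IsRegularSet (X : Set (List α)) : Prop :=
  ∃ (σ : Type) (_ : Fintype σ) (M : DFA α σ), M.accepts = X

section AuxDefect

variable {θ : List α → List α}

lemma litanti_nil (hθ : LitAnti θ) : θ [] = [] := by
  rcases hθ.2.2 with h | h
  · have h2 : θ [] = θ [] ++ θ [] := by simpa using h [] []
    have h3 := congrArg List.length h2
    simp at h3
    exact h3
  · exact h.1

lemma litanti_len (hθ : LitAnti θ) : ∀ w : List α, (θ w).length = w.length := by
  intro w
  induction w with
  | nil => simp [litanti_nil hθ]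
  | cons a t ih =>
    obtain ⟨b, hb⟩ := hθ.2.1 a
    rcases hθ.2.2 with h | h
    · have h2 : θ (a :: t) = θ [a] ++ θ t := by simpa using h [a] t
      simp [h2, hb, ih]
    · have h2 : θ (a :: t) = θ t ++ θ [a] := by simpa using h.2 [a] t
      simp [h2, hb, ih]

lemma litanti_inv (hθ : LitAnti θ) :
    ∃ τ : List α → List α, LitAnti τ ∧ (∀ w, τ (θ w) = w) ∧ (∀ w, θ (τ w) = w) := by
  obtain ⟨τ, hτl, hτr⟩ := Function.bijective_iff_has_inverse.mp hθ.1
  refine ⟨τ, ⟨?_, ?_, ?_⟩, hτl, hτr⟩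
  · exact Function.bijective_iff_has_inverse.mpr ⟨θ, hτr, hτl⟩
  · intro b
    have hlen : (τ [b]).length = 1 := by
      have := litanti_len hθ (τ [b])
      rw [hτr [b]] at this
      simpa using this.symm
    obtain ⟨c, hc⟩ := List.length_eq_one_iff.mp hlen
    exact ⟨c, hc⟩
  · rcases hθ.2.2 with h | h
    · left
      intro u v
      have h1 : θ (τ u ++ τ v) = u ++ v := by rw [h, hτr, hτr]
      have h2 := congrArg τ h1
      rw [hτl (τ u ++ τ v)] at h2
      exact h2.symm
    · right
      constructor
      · have h2 := congrArg τ h.1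
        rw [hτl []] at h2
        exact h2.symm
      · intro u v
        have h1 : θ (τ v ++ τ u) = u ++ v := by rw [h.2, hτr, hτr]
        have h2 := congrArg τ h1
        rw [hτl (τ v ++ τ u)] at h2
        exact h2.symm

lemma image_free (hθ : LitAnti θ) {M : Set (List α)} (hM : FreeSubmonoid M) :
    FreeSubmonoid (θ '' M) := by
  have hinj := hθ.1.1
  have hmem : ∀ x, θ x ∈ θ '' M ↔ x ∈ M := fun x => hinj.mem_set_image
  constructor
  · constructor
    · exact ⟨[], hM.1.1, litanti_nil hθ⟩
    · rintro u ⟨u', hu', rfl⟩ v ⟨v', hv', rfl⟩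
      rcases hθ.2.2 with h | h
      · exact ⟨u' ++ v', hM.1.2 u' hu' v' hv', (h u' v')⟩
      · exact ⟨v' ++ u', hM.1.2 v' hv' u' hu', (h.2 v' u')⟩
  · intro u v w hu huv hw hvw
    obtain ⟨u', hu', rfl⟩ := hu
    obtain ⟨w', hw', rfl⟩ := hw
    obtain ⟨v', rfl⟩ := hθ.1.2 v
    rcases hθ.2.2 with h | h
    · have h1 : u' ++ v' ∈ M := (hmem _).mp (by rwa [h u' v'])
      have h2 : v' ++ w' ∈ M := (hmem _).mp (by rwa [h v' w'])
      exact ⟨v', hM.2 u' v' w' hu' h1 hw' h2, rfl⟩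
    · have h1 : v' ++ u' ∈ M := (hmem _).mp (by rwa [h.2 v' u'])
      have h2 : w' ++ v' ∈ M := (hmem _).mp (by rwa [h.2 w' v'])
      exact ⟨v', hM.2 w' v' u' hw' h2 hu' h1, rfl⟩

lemma star_subset {M X : Set (List α)} (hM : IsSubmonoidSet M) (hXM : X ⊆ M) :
    StarSet X ⊆ M := by
  rintro w ⟨l, hl, rfl⟩
  induction l with
  | nil => exact hM.1
  | cons a t ih =>
    exact hM.2 a (hXM (hl a List.mem_cons_self)) t.flatten
      (ih fun u hu => hl u (List.mem_cons_of_mem a hu))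

lemma exists_first {M : Set (List α)} (hM : FreeSubmonoid M) :
    ∀ n (w : List α), w.length ≤ n → w ∈ M → w ≠ [] →
      ∃ y r, y ∈ MinGen M ∧ r ∈ M ∧ y ++ r = w := by
  intro n
  induction n with
  | zero =>
    intro w hl hw hne
    exact absurd (List.length_eq_zero_iff.mp (Nat.le_zero.mp hl)) hne
  | succ n ih =>
    intro w hl hw hne
    by_cases hmg : w ∈ MinGen M
    · exact ⟨w, [], hmg, hM.1.1, by simp⟩
    · have hdec : ∃ u v, u ∈ M ∧ v ∈ M ∧ u ≠ [] ∧ v ≠ [] ∧ u ++ v = w := by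
        by_contra hcon
        exact hmg ⟨hw, hne, hcon⟩
      obtain ⟨u, v, hu, hv, hune, hvne, huv⟩ := hdec
      have hlen : u.length ≤ n := by
        have hh := congrArg List.length huv
        simp at hh
        have hv1 : 1 ≤ v.length := List.length_pos_iff.mpr hvne
        omega
      obtain ⟨y, r, hy, hr, hyr⟩ := ih u hlen hu hune
      exact ⟨y, r ++ v, hy, hM.1.2 r hr v hv,
        by rw [← huv, ← hyr, List.append_assoc]⟩

lemma unique_first {M : Set (List α)} (hM : FreeSubmonoid M) :
    ∀ y₁ y₂ r₁ r₂ : List α, y₁ ∈ MinGen M → y₂ ∈ MinGen M →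
    r₁ ∈ M → r₂ ∈ M → y₁ ++ r₁ = y₂ ++ r₂ → y₁ = y₂ := by
  have key : ∀ y₁ y₂ r₁ r₂ : List α, y₁.length ≤ y₂.length →
      y₁ ∈ MinGen M → y₂ ∈ MinGen M →
      r₁ ∈ M → r₂ ∈ M → y₁ ++ r₁ = y₂ ++ r₂ → y₁ = y₂ := by
    intro y₁ y₂ r₁ r₂ hle h1 h2 hr1 hr2 heq
    have hpre : y₁ <+: y₂ := by
      have p1 : y₁ <+: y₁ ++ r₁ := List.prefix_append y₁ r₁
      have p2 : y₂ <+: y₁ ++ r₁ := heq ▸ List.prefix_append y₂ r₂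
      exact List.prefix_of_prefix_length_le p1 p2 hle
    obtain ⟨t, rfl⟩ := hpre
    have hr : r₁ = t ++ r₂ := by
      rw [List.append_assoc] at heq
      exact List.append_cancel_left heq
    have ht : t ∈ M := hM.2 y₁ t r₂ h1.1 h2.1 hr2 (hr ▸ hr1)
    by_cases htn : t = []
    · simp [htn]
    · exact absurd ⟨y₁, t, h1.1, ht, h1.2.1, htn, rfl⟩ h2.2.2
  intro y₁ y₂ r₁ r₂ h1 h2 hr1 hr2 heq
  rcases le_total y₁.length y₂.length with hle | hle
  · exact key y₁ y₂ r₁ r₂ hle h1 h2 hr1 hr2 heq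
  · exact (key y₂ y₁ r₂ r₁ hle h2 h1 hr2 hr1 heq.symm).symm

/-- The smallest free submonoid containing `X`. -/
def NN (X : Set (List α)) : Set (List α) := ⋂₀ {M | FreeSubmonoid M ∧ X ⊆ M}

lemma NN_free (X : Set (List α)) : FreeSubmonoid (NN X) := by
  constructor
  · constructor
    · exact fun M hM => hM.1.1.1
    · intro u hu v hv M hM
      exact hM.1.1.2 u (hu M hM) v (hv M hM)
  · intro u v w hu huv hw hvw M hM
    exact hM.1.2 u v w (hu M hM) (huv M hM) (hw M hM) (hvw M hM)

lemma subset_NN (X : Set (List α)) : X ⊆ NN X :=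
  fun x hx M hM => hM.2 hx

lemma NN_min {X M : Set (List α)} (hM : FreeSubmonoid M) (hXM : X ⊆ M) :
    NN X ⊆ M := fun w hw => hw M ⟨hM, hXM⟩

lemma NN_invariant (hθ : LitAnti θ) {X : Set (List α)} (hX : θ '' X = X) :
    θ '' NN X = NN X := by
  obtain ⟨τ, hτ, hτl, hτr⟩ := litanti_inv hθ
  have hτX : τ '' X = X := by
    conv_lhs => rw [← hX]
    rw [← Set.image_comp]
    have : τ ∘ θ = id := funext hτl
    rw [this, Set.image_id]
  have key : ∀ σ : List α → List α, LitAnti σ → σ '' X = X → NN X ⊆ σ '' NN X := by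
    intro σ hσ hσX
    have hsub : σ '' X ⊆ σ '' NN X := Set.image_mono (subset_NN X)
    rw [hσX] at hsub
    exact NN_min (image_free hσ (NN_free X)) hsub
  apply Set.Subset.antisymm
  · have h1 : NN X ⊆ τ '' NN X := key τ hτ hτX
    rintro w ⟨u, hu, rfl⟩
    obtain ⟨v, hvN, rfl⟩ := h1 hu
    rw [hτr v]
    exact hvN
  · exact key θ hθ hX

lemma first_surj {X : Set (List α)} (y₀ : List α) (hy₀ : y₀ ∈ MinGen (NN X)) :
    ∃ x ∈ X, ∃ s ∈ NN X, y₀ ++ s = x := by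
  by_contra hcon
  push_neg at hcon
  set N := NN X with hNdef
  have hNfree := NN_free X
  set M' : Set (List α) := {w | w ∈ N ∧ ¬ ∃ r ∈ N, y₀ ++ r = w} with hM'
  have hM'free : FreeSubmonoid M' := by
    constructor
    · constructor
      · refine ⟨hNfree.1.1, ?_⟩
        rintro ⟨r, hr, hre⟩
        exact hy₀.2.1 (List.append_eq_nil_iff.mp hre).1
      · rintro u ⟨huN, hu⟩ v ⟨hvN, hv⟩
        refine ⟨hNfree.1.2 u huN v hvN, ?_⟩
        rintro ⟨r, hrN, hre⟩
        by_cases hun : u = []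
        · subst hun
          exact hv ⟨r, hrN, by simpa using hre⟩
        · obtain ⟨y, s, hy, hsN, hys⟩ :=
            exists_first hNfree u.length u le_rfl huN hun
        -- y₀ ++ r = u ++ v = y ++ (s ++ v)
          have heq : y₀ ++ r = y ++ (s ++ v) := by
            rw [← List.append_assoc, hys, hre]
          have := unique_first hNfree y₀ y r (s ++ v) hy₀ hy hrN
            (hNfree.1.2 s hsN v hvN) heq
          exact hu ⟨s, hsN, by rw [this]; exact hys⟩
    · intro u v w hu huv hw hvw
      have hvN : v ∈ N := hNfree.2 u v w hu.1 huv.1 hw.1 hvw.1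
      refine ⟨hvN, ?_⟩
      rintro ⟨r, hrN, hre⟩
      exact hvw.2 ⟨r ++ w, hNfree.1.2 r hrN w hw.1,
        by rw [← List.append_assoc, hre]⟩
  have hXM' : X ⊆ M' := by
    intro x hx
    refine ⟨subset_NN X hx, ?_⟩
    rintro ⟨r, hrN, hre⟩
    exact (hcon x hx r hrN) hre
  have : y₀ ∈ M' := NN_min hM'free hXM' hy₀.1
  exact this.2 ⟨[], hNfree.1.1, by simp⟩

lemma noncode_pair {X : Set (List α)} (hnil : [] ∉ X) :
    ∀ (l m : List (List α)), (∀ u ∈ l, u ∈ X) → (∀ u ∈ m, u ∈ X) →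
    l.flatten = m.flatten → l ≠ m →
    ∃ x x' r r', x ∈ X ∧ x' ∈ X ∧ x ≠ x' ∧ r ∈ StarSet X ∧ r' ∈ StarSet X ∧
      x ++ r = x' ++ r' := by
  intro l
  induction l with
  | nil =>
    intro m hl hm hj hne
    cases m with
    | nil => exact absurd rfl hne
    | cons x' m' =>
      exfalso
      have hx' : x' ≠ [] := fun h => hnil (h ▸ hm x' List.mem_cons_self)
      have : ([] : List α) = x' ++ m'.flatten := by simpa using hj
      cases x' with
      | nil => exact hx' rfl
      | cons a t => simp at this
  | cons x l ih =>
    intro m hl hm hj hne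
    cases m with
    | nil =>
      exfalso
      have hx : x ≠ [] := fun h => hnil (h ▸ hl x List.mem_cons_self)
      have : x ++ l.flatten = ([] : List α) := by simpa using hj
      cases x with
      | nil => exact hx rfl
      | cons a t => simp at this
    | cons x' m' =>
      by_cases hxx : x = x'
      · subst hxx
        have hj' : l.flatten = m'.flatten := by
          simp only [List.flatten_cons] at hj
          exact List.append_cancel_left hj
        have hne' : l ≠ m' := fun h => hne (h ▸ rfl)
        exact ih m' (fun u hu => hl u (List.mem_cons_of_mem x hu))
          (fun u hu => hm u (List.mem_cons_of_mem x hu)) hj' hne'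
      · refine ⟨x, x', l.flatten, m'.flatten, hl x List.mem_cons_self,
          hm x' List.mem_cons_self, hxx,
          ⟨l, fun u hu => hl u (List.mem_cons_of_mem x hu), rfl⟩,
          ⟨m', fun u hu => hm u (List.mem_cons_of_mem x' hu), rfl⟩, ?_⟩
        simpa using hj

end AuxDefect

open scoped Classical in
noncomputable def fstFac (X : Set (List α)) (x : List α) : List α :=
  if h : ∃ y r, y ∈ MinGen (NN X) ∧ r ∈ NN X ∧ y ++ r = x then h.choose else []

lemma fstFac_eq {X : Set (List α)} {x y r : List α} (hy : y ∈ MinGen (NN X))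
    (hr : r ∈ NN X) (hx : y ++ r = x) : fstFac X x = y := by
  have hex : ∃ y r, y ∈ MinGen (NN X) ∧ r ∈ NN X ∧ y ++ r = x := ⟨y, r, hy, hr, hx⟩
  rw [fstFac]
  rw [dif_pos hex]
  obtain ⟨r', hy', hr', hx'⟩ := hex.choose_spec
  exact unique_first (NN_free X) _ y r' r hy' hy hr' hr (hx'.trans hx.symm)

theorem stmt2 [Countable α] (θ : List α → List α) (hθ : LitAnti θ)
    (X : Set (List α)) (hXfin : X.Finite) (hXinv : Invariant θ X)
    (hXnc : ¬ IsCode X) (Y : Set (List α))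
    (hY : Y = MinGen (⋂₀ {M | FreeSubmonoid M ∧ Invariant θ M ∧ X ⊆ M})) :
    Y.ncard ≤ X.ncard - 1 := by
  classical
  have hNfree := NN_free X
  have hXN := subset_NN X
  have hNinv : Invariant θ (NN X) := NN_invariant hθ hXinv
  have hEq : (⋂₀ {M | FreeSubmonoid M ∧ Invariant θ M ∧ X ⊆ M}) = NN X := by
    apply Set.Subset.antisymm
    · exact Set.sInter_subset_of_mem ⟨hNfree, hNinv, hXN⟩
    · exact Set.subset_sInter fun M (hM : FreeSubmonoid M ∧ Invariant θ M ∧ X ⊆ M) =>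
        NN_min hM.1 hM.2.2
  have hYN : Y = MinGen (NN X) := by rw [hY, hEq]
  set f := fstFac X with hf
  have hYsub : Y ⊆ f '' (X \ {[]}) := by
    rw [hYN]
    intro y₀ hy₀
    obtain ⟨x, hx, s, hs, hxs⟩ := first_surj y₀ hy₀
    have hxne : x ≠ [] := by
      rintro rfl
      exact hy₀.2.1 (List.append_eq_nil_iff.mp hxs).1
    exact ⟨x, ⟨hx, fun h => hxne (Set.mem_singleton_iff.mp h)⟩,
      fstFac_eq hy₀ hs hxs⟩
  by_cases hnil : [] ∈ X
  · calc Y.ncard ≤ (f '' (X \ {[]})).ncard :=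
          Set.ncard_le_ncard hYsub (hXfin.diff.image f)
      _ ≤ (X \ {[]}).ncard := Set.ncard_image_le hXfin.diff
      _ = X.ncard - 1 := Set.ncard_diff_singleton_of_mem hnil
  · rw [IsCode] at hXnc
    push_neg at hXnc
    obtain ⟨l, m, hl, hm, hj, hlm⟩ := hXnc
    obtain ⟨x, x', r, r', hx, hx', hxx, hr, hr', heq⟩ :=
      noncode_pair hnil l m hl hm hj hlm
    have hrN : r ∈ NN X := star_subset hNfree.1 hXN hr
    have hr'N : r' ∈ NN X := star_subset hNfree.1 hXN hr'
    have hxne : x ≠ [] := fun h => hnil (h ▸ hx)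
    have hx'ne : x' ≠ [] := fun h => hnil (h ▸ hx')
    obtain ⟨y, s, hy, hs, hys⟩ :=
      exists_first hNfree x.length x le_rfl (hXN hx) hxne
    obtain ⟨y', s', hy', hs', hys'⟩ :=
      exists_first hNfree x'.length x' le_rfl (hXN hx') hx'ne
    have hyy : y = y' := by
      refine unique_first hNfree y y' (s ++ r) (s' ++ r') hy hy'
        (hNfree.1.2 s hs r hrN) (hNfree.1.2 s' hs' r' hr'N) ?_
      rw [← List.append_assoc, ← List.append_assoc, hys, hys', heq]
    have hff : f x = f x' := by
      rw [hf, fstFac_eq hy hs hys, fstFac_eq hy' hs' hys', hyy]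
    have himg : f '' (X \ {[]}) ⊆ f '' (X \ {x'}) := by
      rintro w ⟨a, ⟨haX, _⟩, rfl⟩
      by_cases hax : a = x'
      · exact ⟨x, ⟨hx, fun h => hxx (Set.mem_singleton_iff.mp h)⟩,
          by rw [hax, ← hff]⟩
      · exact ⟨a, ⟨haX, fun h => hax (Set.mem_singleton_iff.mp h)⟩, rfl⟩
    calc Y.ncard ≤ (f '' (X \ {x'})).ncard :=
          Set.ncard_le_ncard (hYsub.trans himg) (hXfin.diff.image f)
      _ ≤ (X \ {x'}).ncard := Set.ncard_image_le hXfin.diff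
      _ = X.ncard - 1 := Set.ncard_diff_singleton_of_mem hx'
end

section
/- Let θ be a bijective literal (anti)morphism on A*, let Y be a code with Y* the smallest θ-invariant free submonoid of A* containing a θ-invariant set X ⊆ A*. Then every word y ∈ Y occurs as the initial factor of some word of X, i.e., for every y ∈ Y there exists x ∈ X whose unique factorization over Y begins with y. -/
open List

variable {α : Type*}

/-- Words of `Y` occurring as the head of the factorization of some word of `X`. -/
def InitF (Y X : Set (List α)) : Set (List α) :=
  {z | ∃ x ∈ X, ∃ l : List (List α), (∀ u ∈ l, u ∈ Y) ∧ l.flatten = x ∧ l.head? = some z}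

/-- Words of `Y` occurring as the last factor of some word of `X`. -/
def FinF (Y X : Set (List α)) : Set (List α) :=
  {z | ∃ x ∈ X, ∃ l : List (List α), (∀ u ∈ l, u ∈ Y) ∧ l.flatten = x ∧ l.getLast? = some z}

/-- Auxiliary submonoid: `ε` together with words whose first factor is in
`InitF` and last factor is in `FinF`. -/
def MidM (Y X : Set (List α)) : Set (List α) :=
  {w | w = [] ∨ ∃ l : List (List α), (∀ u ∈ l, u ∈ Y) ∧ l.flatten = w ∧
    (∃ z ∈ InitF Y X, l.head? = some z) ∧ (∃ z ∈ FinF Y X, l.getLast? = some z)}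

theorem stmt3 (θ : List α → List α) (hθ : LitAnti θ)
    (X Y : Set (List α)) (hXinv : Invariant θ X) (hYcode : IsCode Y)
    (hfree : FreeSubmonoid (StarSet Y)) (hinv : Invariant θ (StarSet Y))
    (hsub : X ⊆ StarSet Y)
    (hmin : ∀ M, FreeSubmonoid M → Invariant θ M → X ⊆ M → StarSet Y ⊆ M)
    (hgen : Y = MinGen (StarSet Y)) :
    ∀ y ∈ Y, ∃ x ∈ X, ∃ l : List (List α),
      (∀ u ∈ l, u ∈ Y) ∧ x = y ++ l.flatten :=  by
  obtain ⟨hbij, hlit, hmora⟩ := hθ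
  -- θ [] = []
  have hθnil : θ [] = [] := by
    rcases hmora with hm | ha
    · have h := hm [] []
      simp only [List.append_nil] at h
      have hl := congrArg List.length h
      simp only [List.length_append] at hl
      exact List.eq_nil_of_length_eq_zero (by omega)
    · exact ha.1
  -- join/map lemmas
  have hjoinm : ∀ (_ : IsMorphism θ) (l : List (List α)),
      (l.map θ).flatten = θ l.flatten := by
    intro hm l
    induction l with
    | nil => simpa using hθnil.symm
    | cons u t ih => simp [hm u t.flatten, ih]
  have hjoina : ∀ (_ : IsAntimorphism θ) (l : List (List α)),
      (l.reverse.map θ).flatten = θ l.flatten := by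
    intro ha l
    induction l with
    | nil => simpa using ha.1.symm
    | cons u t ih => simp [ha.2 u t.flatten, ← ih]
  have hjapp : ∀ (a b : List (List α)), (a ++ b).flatten = a.flatten ++ b.flatten := by
    intro a b
    induction a with
    | nil => simp
    | cons x t ih => simp [ih]
  have hYne : ∀ y ∈ Y, y ≠ [] := by
    intro y hy; rw [hgen] at hy; exact hy.2.1
  -- θ maps Y into Y
  have hθY : ∀ y ∈ Y, θ y ∈ Y := by
    intro y hy
    have hyS : y ∈ StarSet Y := ⟨[y], by simp [hy], by simp⟩
    have hθyS : θ y ∈ StarSet Y := hinv ▸ Set.mem_image_of_mem θ hyS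
    have hy' : y ∈ MinGen (StarSet Y) := hgen ▸ hy
    rw [hgen]
    refine ⟨hθyS, ?_, ?_⟩
    · intro h
      exact hYne y hy (hbij.1 (h.trans hθnil.symm))
    · rintro ⟨u, v, hu, hv, hune, hvne, huv⟩
      rw [← hinv] at hu hv
      obtain ⟨u', hu', rfl⟩ := hu
      obtain ⟨v', hv', rfl⟩ := hv
      have hu'ne : u' ≠ [] := fun h => hune (by rw [h, hθnil])
      have hv'ne : v' ≠ [] := fun h => hvne (by rw [h, hθnil])
      rcases hmora with hm | ha
      · exact hy'.2.2 ⟨u', v', hu', hv', hu'ne, hv'ne, hbij.1 ((hm u' v').trans huv)⟩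
      · exact hy'.2.2 ⟨v', u', hv', hu', hv'ne, hu'ne, hbij.1 ((ha.2 v' u').trans huv)⟩
  -- factorization transport under θ, morphism case
  have hfactm : ∀ (_ : IsMorphism θ) (l : List (List α)), (∀ u ∈ l, u ∈ Y) →
      (∀ u ∈ l.map θ, u ∈ Y) ∧ (l.map θ).flatten = θ l.flatten := by
    intro hm l hl
    refine ⟨?_, hjoinm hm l⟩
    intro u hu
    obtain ⟨v, hv, rfl⟩ := List.mem_map.mp hu
    exact hθY v (hl v hv)
  have hfacta : ∀ (_ : IsAntimorphism θ) (l : List (List α)), (∀ u ∈ l, u ∈ Y) →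
      (∀ u ∈ l.reverse.map θ, u ∈ Y) ∧ (l.reverse.map θ).flatten = θ l.flatten := by
    intro ha l hl
    refine ⟨?_, hjoina ha l⟩
    intro u hu
    obtain ⟨v, hv, rfl⟩ := List.mem_map.mp hu
    exact hθY v (hl v (List.mem_reverse.mp hv))
  -- transport of InitF and FinF under θ: forward
  have hZfwd : ∀ z ∈ InitF Y X,
      (IsMorphism θ → θ z ∈ InitF Y X) ∧ (IsAntimorphism θ → θ z ∈ FinF Y X) := by
    rintro z ⟨x, hx, l, hl, hjoin, hhead⟩
    have hθx : θ x ∈ X := hXinv ▸ Set.mem_image_of_mem θ hx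
    constructor
    · intro hm
      obtain ⟨h1, h2⟩ := hfactm hm l hl
      exact ⟨θ x, hθx, l.map θ, h1, by rw [h2, hjoin],
        by rw [List.head?_map, hhead]; rfl⟩
    · intro ha
      obtain ⟨h1, h2⟩ := hfacta ha l hl
      refine ⟨θ x, hθx, l.reverse.map θ, h1, by rw [h2, hjoin], ?_⟩
      rw [List.getLast?_map, List.getLast?_reverse, hhead]; rfl
  have hZ'fwd : ∀ z ∈ FinF Y X,
      (IsMorphism θ → θ z ∈ FinF Y X) ∧ (IsAntimorphism θ → θ z ∈ InitF Y X) := by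
    rintro z ⟨x, hx, l, hl, hjoin, hlast⟩
    have hθx : θ x ∈ X := hXinv ▸ Set.mem_image_of_mem θ hx
    constructor
    · intro hm
      obtain ⟨h1, h2⟩ := hfactm hm l hl
      exact ⟨θ x, hθx, l.map θ, h1, by rw [h2, hjoin],
        by rw [List.getLast?_map, hlast]; rfl⟩
    · intro ha
      obtain ⟨h1, h2⟩ := hfacta ha l hl
      refine ⟨θ x, hθx, l.reverse.map θ, h1, by rw [h2, hjoin], ?_⟩
      rw [List.head?_map, List.head?_reverse, hlast]; rfl
  -- transport backward (surjectivity on the distinguished sets)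
  have hZbwd : ∀ z ∈ InitF Y X,
      (IsMorphism θ → ∃ z₀ ∈ InitF Y X, θ z₀ = z) ∧
      (IsAntimorphism θ → ∃ z₀ ∈ FinF Y X, θ z₀ = z) := by
    rintro z ⟨x, hx, l, hl, hjoin, hhead⟩
    rw [← hXinv] at hx
    obtain ⟨x₀, hx₀, rfl⟩ := hx
    obtain ⟨l₀, hl₀, hj₀⟩ := hsub hx₀
    constructor
    · intro hm
      obtain ⟨h1, h2⟩ := hfactm hm l₀ hl₀
      have heq : l₀.map θ = l := hYcode _ _ h1 hl (by rw [h2, hj₀, hjoin])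
      have : (l₀.head?).map θ = some z := by rw [← List.head?_map, heq, hhead]
      obtain ⟨z₀, hz₀, hz₀e⟩ := Option.map_eq_some_iff.mp this
      exact ⟨z₀, ⟨x₀, hx₀, l₀, hl₀, hj₀, hz₀⟩, hz₀e⟩
    · intro ha
      obtain ⟨h1, h2⟩ := hfacta ha l₀ hl₀
      have heq : l₀.reverse.map θ = l := hYcode _ _ h1 hl (by rw [h2, hj₀, hjoin])
      have : (l₀.getLast?).map θ = some z := by
        rw [← List.head?_reverse, ← List.head?_map, heq, hhead]
      obtain ⟨z₀, hz₀, hz₀e⟩ := Option.map_eq_some_iff.mp this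
      exact ⟨z₀, ⟨x₀, hx₀, l₀, hl₀, hj₀, hz₀⟩, hz₀e⟩
  have hZ'bwd : ∀ z ∈ FinF Y X,
      (IsMorphism θ → ∃ z₀ ∈ FinF Y X, θ z₀ = z) ∧
      (IsAntimorphism θ → ∃ z₀ ∈ InitF Y X, θ z₀ = z) := by
    rintro z ⟨x, hx, l, hl, hjoin, hlast⟩
    rw [← hXinv] at hx
    obtain ⟨x₀, hx₀, rfl⟩ := hx
    obtain ⟨l₀, hl₀, hj₀⟩ := hsub hx₀
    constructor
    · intro hm
      obtain ⟨h1, h2⟩ := hfactm hm l₀ hl₀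
      have heq : l₀.map θ = l := hYcode _ _ h1 hl (by rw [h2, hj₀, hjoin])
      have : (l₀.getLast?).map θ = some z := by rw [← List.getLast?_map, heq, hlast]
      obtain ⟨z₀, hz₀, hz₀e⟩ := Option.map_eq_some_iff.mp this
      exact ⟨z₀, ⟨x₀, hx₀, l₀, hl₀, hj₀, hz₀⟩, hz₀e⟩
    · intro ha
      obtain ⟨h1, h2⟩ := hfacta ha l₀ hl₀
      have heq : l₀.reverse.map θ = l := hYcode _ _ h1 hl (by rw [h2, hj₀, hjoin])
      have : (l₀.head?).map θ = some z := by
        rw [← List.getLast?_reverse, ← List.getLast?_map, heq, hlast]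
      obtain ⟨z₀, hz₀, hz₀e⟩ := Option.map_eq_some_iff.mp this
      exact ⟨z₀, ⟨x₀, hx₀, l₀, hl₀, hj₀, hz₀⟩, hz₀e⟩
  -- M is a submonoid
  have hMsub : IsSubmonoidSet (MidM Y X) := by
    constructor
    · exact Or.inl rfl
    · rintro u (rfl | ⟨lu, hlu, hju, ⟨z, hz, hhu⟩, ⟨z', hz', hgu⟩⟩) v hv
      · simpa using hv
      rcases hv with rfl | ⟨lv, hlv, hjv, ⟨w, hw, hhv⟩, ⟨w', hw', hgv⟩⟩
      · rw [List.append_nil]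
        exact Or.inr ⟨lu, hlu, hju, ⟨z, hz, hhu⟩, ⟨z', hz', hgu⟩⟩
      · refine Or.inr ⟨lu ++ lv, ?_, by rw [hjapp, hju, hjv],
          ⟨z, hz, ?_⟩, ⟨w', hw', ?_⟩⟩
        · intro a ha
          rcases List.mem_append.mp ha with h | h
          exacts [hlu a h, hlv a h]
        · rw [List.head?_append, hhu]; rfl
        · rw [List.getLast?_append, hgv]; rfl
  -- M ⊆ Y*
  have hMstar : MidM Y X ⊆ StarSet Y := by
    rintro w (rfl | ⟨l, hl, hj, _, _⟩)
    · exact ⟨[], by simp, rfl⟩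
    · exact ⟨l, hl, hj⟩
  -- M is stable
  have hMstable : Stable (MidM Y X) := by
    intro u v w hu huv hw hvw
    have hvS : v ∈ StarSet Y :=
      hfree.2 u v w (hMstar hu) (hMstar huv) (hMstar hw) (hMstar hvw)
    rcases eq_or_ne v [] with rfl | hvne
    · exact Or.inl rfl
    obtain ⟨lv, hlv, hjv⟩ := hvS
    have hlvne : lv ≠ [] := by rintro rfl; exact hvne hjv.symm
    obtain ⟨lu, hlu, hju⟩ := hMstar hu
    obtain ⟨lw, hlw, hjw⟩ := hMstar hw
    -- first factor of v from v ++ w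
    rcases hvw with hvw0 | ⟨m, hm, hjm, ⟨z, hz, hhm⟩, _⟩
    · exact absurd (List.append_eq_nil_iff.mp hvw0).1 hvne
    have hmeq : m = lv ++ lw := by
      refine hYcode _ _ hm ?_ ?_
      · intro a ha; rcases List.mem_append.mp ha with h | h
        exacts [hlv a h, hlw a h]
      · rw [hjm, hjapp, hjv, hjw]
    have hheadv : lv.head? = some z := by
      rw [hmeq, List.head?_append] at hhm
      cases hlvh : lv.head? with
      | none => exact absurd (List.head?_eq_none_iff.mp hlvh) hlvne
      | some a => rw [hlvh] at hhm; simpa using hhm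
    -- last factor of v from u ++ v
    rcases huv with huv0 | ⟨n, hn, hjn, _, ⟨z', hz', hgn⟩⟩
    · exact absurd (List.append_eq_nil_iff.mp huv0).2 hvne
    have hneq : n = lu ++ lv := by
      refine hYcode _ _ hn ?_ ?_
      · intro a ha; rcases List.mem_append.mp ha with h | h
        exacts [hlu a h, hlv a h]
      · rw [hjn, hjapp, hju, hjv]
    have hlastv : lv.getLast? = some z' := by
      rw [hneq, List.getLast?_append] at hgn
      cases hlvg : lv.getLast? with
      | none => exact absurd (List.getLast?_eq_none_iff.mp hlvg) hlvne
      | some a => rw [hlvg] at hgn; simpa using hgn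
    exact Or.inr ⟨lv, hlv, hjv, ⟨z, hz, hheadv⟩, ⟨z', hz', hlastv⟩⟩
  -- X ⊆ M
  have hXM : X ⊆ MidM Y X := by
    intro x hx
    obtain ⟨l, hl, hj⟩ := hsub hx
    cases l with
    | nil => exact Or.inl hj.symm
    | cons a t =>
      have hne : a :: t ≠ [] := List.cons_ne_nil a t
      obtain ⟨g, hg⟩ := Option.isSome_iff_exists.mp (List.getLast?_isSome.mpr hne)
      exact Or.inr ⟨a :: t, hl, hj,
        ⟨a, ⟨x, hx, a :: t, hl, hj, rfl⟩, rfl⟩,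
        ⟨g, ⟨x, hx, a :: t, hl, hj, hg⟩, hg⟩⟩
  -- M is θ-invariant
  have hMinv : Invariant θ (MidM Y X) := by
    apply Set.eq_of_subset_of_subset
    · rintro _ ⟨m, (rfl | ⟨l, hl, hj, ⟨z, hz, hh⟩, ⟨z', hz', hg⟩⟩), rfl⟩
      · rw [hθnil]; exact Or.inl rfl
      rcases hmora with hm | ha
      · obtain ⟨h1, h2⟩ := hfactm hm l hl
        refine Or.inr ⟨l.map θ, h1, by rw [h2, hj], ⟨θ z, (hZfwd z hz).1 hm, ?_⟩,
          ⟨θ z', (hZ'fwd z' hz').1 hm, ?_⟩⟩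
        · rw [List.head?_map, hh]; rfl
        · rw [List.getLast?_map, hg]; rfl
      · obtain ⟨h1, h2⟩ := hfacta ha l hl
        refine Or.inr ⟨l.reverse.map θ, h1, by rw [h2, hj],
          ⟨θ z', (hZ'fwd z' hz').2 ha, ?_⟩, ⟨θ z, (hZfwd z hz).2 ha, ?_⟩⟩
        · rw [List.head?_map, List.head?_reverse, hg]; rfl
        · rw [List.getLast?_map, List.getLast?_reverse, hh]; rfl
    · rintro m (rfl | ⟨l, hl, hj, ⟨z, hz, hh⟩, ⟨z', hz', hg⟩⟩)
      · exact ⟨[], Or.inl rfl, hθnil⟩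
      have hmS : m ∈ StarSet Y := ⟨l, hl, hj⟩
      rw [← hinv] at hmS
      obtain ⟨m', hm'S, rfl⟩ := hmS
      obtain ⟨l', hl', hj'⟩ := hm'S
      refine ⟨m', ?_, rfl⟩
      rcases hmora with hm | ha
      · obtain ⟨h1, h2⟩ := hfactm hm l' hl'
        have heq : l'.map θ = l := hYcode _ _ h1 hl (by rw [h2, hj', hj])
        have hh' : (l'.head?).map θ = some z := by rw [← List.head?_map, heq, hh]
        obtain ⟨a, ha1, ha2⟩ := Option.map_eq_some_iff.mp hh'
        have hg' : (l'.getLast?).map θ = some z' := by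
          rw [← List.getLast?_map, heq, hg]
        obtain ⟨b, hb1, hb2⟩ := Option.map_eq_some_iff.mp hg'
        obtain ⟨z₀, hz₀, hz₀e⟩ := (hZbwd z hz).1 hm
        obtain ⟨z₁, hz₁, hz₁e⟩ := (hZ'bwd z' hz').1 hm
        have : a = z₀ := hbij.1 (ha2.trans hz₀e.symm)
        have hb : b = z₁ := hbij.1 (hb2.trans hz₁e.symm)
        exact Or.inr ⟨l', hl', hj', ⟨a, this ▸ hz₀, ha1⟩, ⟨b, hb ▸ hz₁, hb1⟩⟩
      · obtain ⟨h1, h2⟩ := hfacta ha l' hl'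
        have heq : l'.reverse.map θ = l := hYcode _ _ h1 hl (by rw [h2, hj', hj])
        have hh' : (l'.getLast?).map θ = some z := by
          rw [← List.head?_reverse, ← List.head?_map, heq, hh]
        obtain ⟨a, ha1, ha2⟩ := Option.map_eq_some_iff.mp hh'
        have hg' : (l'.head?).map θ = some z' := by
          rw [← List.getLast?_reverse, ← List.getLast?_map, heq, hg]
        obtain ⟨b, hb1, hb2⟩ := Option.map_eq_some_iff.mp hg'
        obtain ⟨z₀, hz₀, hz₀e⟩ := (hZbwd z hz).2 ha
        obtain ⟨z₁, hz₁, hz₁e⟩ := (hZ'bwd z' hz').2 ha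
        have hA : a = z₀ := hbij.1 (ha2.trans hz₀e.symm)
        have hB : b = z₁ := hbij.1 (hb2.trans hz₁e.symm)
        exact Or.inr ⟨l', hl', hj', ⟨b, hB ▸ hz₁, hb1⟩, ⟨a, hA ▸ hz₀, ha1⟩⟩
  -- conclude
  have hYM : StarSet Y ⊆ MidM Y X := hmin _ ⟨hMsub, hMstable⟩ hMinv hXM
  intro y hy
  have hyM : y ∈ MidM Y X := hYM ⟨[y], by simp [hy], by simp⟩
  rcases hyM with rfl | ⟨l, hl, hj, ⟨z, hz, hh⟩, _⟩
  · exact absurd rfl (hYne _ hy)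
  have hly : l = [y] := hYcode _ _ hl (by simp [hy]) (by simp [hj])
  have hzy : z = y := by rw [hly] at hh; simpa using hh.symm
  subst hzy
  obtain ⟨x, hx, l', hl', hj', hh'⟩ := hz
  cases l' with
  | nil => simp at hh'
  | cons a t =>
    have : a = z := by simpa using hh'
    subst this
    exact ⟨x, hx, t, fun u hu => hl' u (List.mem_cons_of_mem a hu), by simp [← hj']⟩
end

section
/- Let |A| ≥ 2, and let z = b̄^n · b x b̄ · b^n denote any word of the form where b ≠ b̄ are letters, |x| = n − 2, n ≥ 2 (so |z| = 3n). Let z' = c̄^n · c x' c̄ · c^n be another word of the same shape and same length (c ≠ c̄ letters, |x'| = n − 2). If u, v ∈ A⁺ with |u| ≤ |z| − 1 satisfy z·v = u·z', then |u| = |v| ≥ 2n, and there is a letter d and a unique integer k with 1 ≤ k ≤ n such that z = u·d^k and z' = d^k·v. -/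
open List

variable {α : Type*}

lemma blk_len (b bb : α) (n : ℕ) (hn : 2 ≤ n) (x : List α) (hx : x.length = n - 2) :
    (List.replicate n bb ++ [b] ++ x ++ [bb] ++ List.replicate n b).length = 3 * n := by
  simp [hx]; try omega

lemma blk1 (b bb : α) (n : ℕ) (hn : 2 ≤ n) (x : List α) (hx : x.length = n - 2)
    (i : ℕ) (hi : i < n) :
    (List.replicate n bb ++ [b] ++ x ++ [bb] ++ List.replicate n b)[i]? = some bb := by
  rw [List.getElem?_append_left (by simp [hx]; try omega),
      List.getElem?_append_left (by simp [hx]; try omega),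
      List.getElem?_append_left (by simp [hx]; try omega),
      List.getElem?_append_left (by simp; try omega)]
  simp [List.getElem?_replicate, hi]

lemma blk2 (b bb : α) (n : ℕ) (hn : 2 ≤ n) (x : List α) (hx : x.length = n - 2) :
    (List.replicate n bb ++ [b] ++ x ++ [bb] ++ List.replicate n b)[n]? = some b := by
  rw [List.getElem?_append_left (by simp [hx]; try omega),
      List.getElem?_append_left (by simp [hx]; try omega),
      List.getElem?_append_left (by simp [hx]; try omega),
      List.getElem?_append_right (by simp)]
  simp

lemma blk3 (b bb : α) (n : ℕ) (hn : 2 ≤ n) (x : List α) (hx : x.length = n - 2) :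
    (List.replicate n bb ++ [b] ++ x ++ [bb] ++ List.replicate n b)[2*n-1]? = some bb := by
  rw [List.getElem?_append_left (by simp [hx]; try omega),
      List.getElem?_append_right (by simp [hx]; try omega)]
  have : 2*n-1 - (List.replicate n bb ++ [b] ++ x).length = 0 := by simp [hx]; try omega
  rw [this]; simp

lemma blk4 (b bb : α) (n : ℕ) (hn : 2 ≤ n) (x : List α) (hx : x.length = n - 2)
    (i : ℕ) (h1 : 2*n ≤ i) (h2 : i < 3*n) :
    (List.replicate n bb ++ [b] ++ x ++ [bb] ++ List.replicate n b)[i]? = some b := by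
  rw [List.getElem?_append_right (by simp [hx]; try omega)]
  rw [List.getElem?_replicate, if_pos (by simp [hx]; try omega)]

theorem stmt5 (b bb c cb : α) (hb : b ≠ bb) (hc : c ≠ cb)
    (n : ℕ) (hn : 2 ≤ n) (x x' : List α)
    (hx : x.length = n - 2) (hx' : x'.length = n - 2)
    (z z' u v : List α)
    (hz : z = List.replicate n bb ++ [b] ++ x ++ [bb] ++ List.replicate n b)
    (hz' : z' = List.replicate n cb ++ [c] ++ x' ++ [cb] ++ List.replicate n c)
    (hu : u ≠ []) (hv : v ≠ []) (hul : u.length ≤ 3 * n - 1)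
    (heq : z ++ v = u ++ z') :
    u.length = v.length ∧ 2 * n ≤ u.length ∧
      ∃ d : α, ∃! k : ℕ, 1 ≤ k ∧ k ≤ n ∧
        z = u ++ List.replicate k d ∧ z' = List.replicate k d ++ v := by
  have hzl : z.length = 3*n := by rw [hz]; exact blk_len b bb n hn x hx
  have hzl' : z'.length = 3*n := by rw [hz']; exact blk_len c cb n hn x' hx'
  have hlen : u.length = v.length := by
    have := congrArg List.length heq
    simp only [List.length_append, hzl, hzl'] at this; omega
  set m := u.length with hm
  have hm1 : 1 ≤ m := List.length_pos_iff.mpr hu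
  set k := 3*n - m with hk
  have hmk : m = 3*n - k := by omega
  have hk1 : 1 ≤ k := by omega
  have hkey : ∀ i, i < k → z'[i]? = z[m+i]? := by
    intro i hi
    have h1 : (z ++ v)[m+i]? = (u ++ z')[m+i]? := by rw [heq]
    rw [List.getElem?_append_left (by omega), List.getElem?_append_right (by omega)] at h1
    have h2 : m + i - u.length = i := by omega
    rw [h2] at h1; exact h1.symm
  -- z getElem facts
  have hz4 : ∀ i, 2*n ≤ i → i < 3*n → z[i]? = some b := by
    intro i h1 h2; rw [hz]; exact blk4 b bb n hn x hx i h1 h2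
  have hz3 : z[2*n-1]? = some bb := by rw [hz]; exact blk3 b bb n hn x hx
  have hz2 : z[n]? = some b := by rw [hz]; exact blk2 b bb n hn x hx
  have hz1 : ∀ i, i < n → z[i]? = some bb := by
    intro i h1; rw [hz]; exact blk1 b bb n hn x hx i h1
  have hz1' : ∀ i, i < n → z'[i]? = some cb := by
    intro i h1; rw [hz']; exact blk1 c cb n hn x' hx' i h1
  -- show k ≤ n
  have hkn : k ≤ n := by
    by_contra hkn
    push_neg at hkn
    have hcb_b : cb = b := by
      rcases le_or_gt (2*n) k with h | h
      · -- i = k - 2n, m + i = n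
        have e := hkey (k - 2*n) (by omega)
        have h2 : m + (k - 2*n) = n := by omega
        rw [h2, hz2, hz1' _ (by omega)] at e
        exact Option.some.inj e
      · -- i = k - n, m + i = 2n
        have e := hkey (k - n) (by omega)
        have h2 : m + (k - n) = 2*n := by omega
        rw [h2, hz4 _ (by omega) (by omega), hz1' _ (by omega)] at e
        exact Option.some.inj e
    have hcb_bb : cb = bb := by
      rcases le_or_gt k (2*n) with h | h
      · -- i = k - n - 1, m + i = 2n - 1
        have e := hkey (k - n - 1) (by omega)
        have h2 : m + (k - n - 1) = 2*n - 1 := by omega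
        rw [h2, hz3, hz1' _ (by omega)] at e
        exact Option.some.inj e
      · -- i = k - 2n - 1, m + i = n - 1
        have e := hkey (k - 2*n - 1) (by omega)
        have h2 : m + (k - 2*n - 1) = n - 1 := by omega
        rw [h2, hz1 _ (by omega), hz1' _ (by omega)] at e
        exact Option.some.inj e
    exact hb (hcb_b.symm.trans hcb_bb)
  have hdrop : z.drop m = List.replicate k b := by
    have hm2 : m = (List.replicate n bb ++ [b] ++ x ++ [bb]).length + (m - 2*n) := by
      simp [hx]; omega
    rw [hz, hm2, List.drop_length_add_append, List.drop_replicate]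
    congr 1
    simp [hx] at hm2
    omega
  refine ⟨hlen, by omega, b, k, ⟨hk1, hkn, ?_, ?_⟩, ?_⟩
  · -- z = u ++ replicate k b
    have hu_eq : u = z.take m := by
      have h1 : (z ++ v).take m = (u ++ z').take m := by rw [heq]
      rw [List.take_append_of_le_length (by omega), List.take_left' rfl] at h1
      exact h1.symm
    rw [hu_eq, ← hdrop]
    exact (List.take_append_drop m z).symm
  · -- z' = replicate k b ++ v
    have h1 : (z ++ v).drop m = (u ++ z').drop m := by rw [heq]
    rw [List.drop_append_of_le_length (by omega), List.drop_left' rfl, hdrop] at h1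
    exact h1.symm
  · rintro k' ⟨_, _, hzk, _⟩
    have := congrArg List.length hzk
    simp only [List.length_append, List.length_replicate, hzl] at this
    omega
end

section
/- Let X ⊆ A* be a θ-invariant code which is not complete, let y ∉ F(X*) with |y| ≥ 2 whose first and last letters differ, write y = a x ā with letters a ≠ ā, set z = ā^{|y|} y a^{|y|}, and let Z = {θⁱ(z) : i ∈ ℤ}. Then A⁺ Z A⁺ ∩ Z X* Z = ∅; that is, no word of the form z₂ w z₃ with z₂, z₃ ∈ Z and w ∈ X* contains an element of Z as a proper internal factor. -/
open List

variable {α : Type*}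

lemma litAnti_nil {θ : List α → List α} (hθ : LitAnti θ) : θ [] = [] := by
  rcases hθ.2.2 with hm | hA
  · have h := hm [] []
    simp only [List.append_nil] at h
    have := congrArg List.length h
    simp only [List.length_append] at this
    exact List.length_eq_zero_iff.mp (by omega)
  · exact hA.1

lemma litAnti_length {θ : List α → List α} (hθ : LitAnti θ) (w : List α) :
    (θ w).length = w.length := by
  induction w with
  | nil => simp [litAnti_nil hθ]
  | cons a t ih =>
    obtain ⟨b, hb⟩ := hθ.2.1 a
    rcases hθ.2.2 with hm | hA
    · have h := hm [a] t
      simp only [List.singleton_append] at h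
      rw [h, hb]
      simp [ih]
    · have h := hA.2 [a] t
      simp only [List.singleton_append] at h
      rw [h, hb]
      simp [ih]

lemma litAnti_replicate {θ : List α → List α} (hθ : LitAnti θ) (n : ℕ) {c b : α}
    (hb : θ [c] = [b]) : θ (replicate n c) = replicate n b := by
  induction n with
  | zero => simpa using litAnti_nil hθ
  | succ k ih =>
    rcases hθ.2.2 with hm | hA
    · rw [List.replicate_succ, show (c :: replicate k c) = [c] ++ replicate k c from rfl,
        hm, hb, ih]
      simp [List.replicate_succ]
    · rw [List.replicate_succ, show (c :: replicate k c) = [c] ++ replicate k c from rfl,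
        hA.2, hb, ih, ← List.replicate_succ']

lemma litAnti_letter_surj {θ : List α → List α} (hθ : LitAnti θ) (b : α) :
    ∃ a, θ [a] = [b] := by
  obtain ⟨w, hw⟩ := hθ.1.2 [b]
  have hl : w.length = 1 := by
    have := litAnti_length hθ w
    rw [hw] at this; simpa using this.symm
  obtain ⟨a, rfl⟩ := List.length_eq_one_iff.mp hl
  exact ⟨a, hw⟩

lemma litAnti_inv {θ : List α → List α} (hθ : LitAnti θ) :
    LitAnti (Function.invFun θ) := by
  have hg1 : Function.LeftInverse (Function.invFun θ) θ :=
    Function.leftInverse_invFun hθ.1.1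
  have hg2 : Function.RightInverse (Function.invFun θ) θ :=
    Function.rightInverse_invFun hθ.1.2
  refine ⟨Function.bijective_iff_has_inverse.mpr ⟨θ, hg2, hg1⟩, ?_, ?_⟩
  · intro b
    obtain ⟨a, ha⟩ := litAnti_letter_surj hθ b
    exact ⟨a, by rw [← ha, hg1 [a]]⟩
  · rcases hθ.2.2 with hm | hA
    · left
      intro u v
      apply hθ.1.1
      rw [hg2, hm, hg2, hg2]
    · right
      refine ⟨?_, ?_⟩
      · apply hθ.1.1
        rw [hg2, hA.1]
      · intro u v
        apply hθ.1.1
        rw [hg2, hA.2, hg2, hg2]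

lemma invariant_inv {θ : List α → List α} {X : Set (List α)} (hθ : LitAnti θ)
    (hinv : Invariant θ X) : Invariant (Function.invFun θ) X := by
  have hg1 : Function.LeftInverse (Function.invFun θ) θ :=
    Function.leftInverse_invFun hθ.1.1
  unfold Invariant at *
  conv_lhs => rw [← hinv]
  rw [← Set.image_comp, hg1.comp_eq_id, Set.image_id]

lemma join_map_m {θ : List α → List α} (hm : IsMorphism θ) (hnil : θ [] = []) :
    ∀ l : List (List α), θ l.flatten = (l.map θ).flatten := by
  intro l
  induction l with
  | nil => simpa using hnil
  | cons h t ih =>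
    show θ (h ++ t.flatten) = _
    rw [hm h t.flatten, ih]
    simp

lemma join_map_a {θ : List α → List α} (hA : IsAntimorphism θ) :
    ∀ l : List (List α), θ l.flatten = ((l.map θ).reverse).flatten := by
  intro l
  induction l with
  | nil => simpa using hA.1
  | cons h t ih => simp [hA.2, ih]

lemma starSet_map {θ : List α → List α} {X : Set (List α)} (hθ : LitAnti θ)
    (hinv : Invariant θ X) {u : List α} (hu : u ∈ StarSet X) : θ u ∈ StarSet X := by
  have hx : ∀ x ∈ X, θ x ∈ X := fun x hx => hinv ▸ Set.mem_image_of_mem θ hx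
  obtain ⟨l, hl, rfl⟩ := hu
  rcases hθ.2.2 with hm | hA
  · refine ⟨l.map θ, ?_, (join_map_m hm (litAnti_nil hθ) l).symm⟩
    intro u hu
    obtain ⟨x, hxl, rfl⟩ := List.mem_map.mp hu
    exact hx x (hl x hxl)
  · refine ⟨(l.map θ).reverse, ?_, (join_map_a hA l).symm⟩
    intro u hu
    obtain ⟨x, hxl, rfl⟩ := List.mem_map.mp (List.mem_reverse.mp hu)
    exact hx x (hl x hxl)

lemma factors_map {θ : List α → List α} {X : Set (List α)} (hθ : LitAnti θ)
    (hinv : Invariant θ X) {u : List α} (hu : u ∈ Factors (StarSet X)) :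
    θ u ∈ Factors (StarSet X) := by
  obtain ⟨W, hW, p, s, hps⟩ := hu
  refine ⟨θ W, starSet_map hθ hinv hW, ?_⟩
  rcases hθ.2.2 with hm | hA
  · exact ⟨θ p, θ s, by rw [← hps, hm, hm]⟩
  · exact ⟨θ s, θ p, by rw [← hps, hA.2, hA.2, List.append_assoc]⟩

def GoodW (X : Set (List α)) (n : ℕ) (w : List α) : Prop :=
  ∃ (c c' : α) (t : List α), c ≠ c' ∧ n = t.length + 2 ∧
    w = replicate n c' ++ ([c] ++ t ++ [c']) ++ replicate n c ∧
    ([c] ++ t ++ [c']) ∉ Factors (StarSet X)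

lemma good_map {θ ψ : List α → List α} {X : Set (List α)} {n : ℕ} {w : List α}
    (hθ : LitAnti θ) (hψ : LitAnti ψ) (hinvψ : Invariant ψ X)
    (hid : ∀ w, ψ (θ w) = w) (h : GoodW X n w) : GoodW X n (θ w) := by
  obtain ⟨c, c', t, hcc, hn, rfl, hm⟩ := h
  obtain ⟨b, hb⟩ := hθ.2.1 c
  obtain ⟨b', hb'⟩ := hθ.2.1 c'
  have hbb : b ≠ b' := by
    intro hEq
    apply hcc
    have : θ [c] = θ [c'] := by rw [hb, hb', hEq]
    have := hθ.1.1 this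
    simpa using this
  have hnotF : θ ([c] ++ t ++ [c']) ∉ Factors (StarSet X) := by
    intro hF
    apply hm
    have := factors_map hψ hinvψ hF
    rwa [hid] at this
  have htl : (θ t).length = t.length := litAnti_length hθ t
  rcases hθ.2.2 with hmor | hA
  · refine ⟨b, b', θ t, hbb, by omega, ?_, ?_⟩
    · rw [hmor, hmor, litAnti_replicate hθ n hb', litAnti_replicate hθ n hb]
      congr 1
      congr 1
      rw [hmor, hmor, hb, hb']
    · have : θ ([c] ++ t ++ [c']) = [b] ++ θ t ++ [b'] := by
        rw [hmor, hmor, hb, hb']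
      rwa [this] at hnotF
  · refine ⟨b', b, θ t, hbb.symm, by omega, ?_, ?_⟩
    · rw [hA.2, hA.2, litAnti_replicate hθ n hb', litAnti_replicate hθ n hb]
      have : θ ([c] ++ t ++ [c']) = [b'] ++ θ t ++ [b] := by
        rw [hA.2, hA.2, hb, hb']
        simp
      rw [this]
      simp [List.append_assoc]
    · have : θ ([c] ++ t ++ [c']) = [b'] ++ θ t ++ [b] := by
        rw [hA.2, hA.2, hb, hb']
        simp
      rwa [this] at hnotF

lemma good_iter {θ ψ : List α → List α} {X : Set (List α)} {n : ℕ} {w : List α}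
    (hθ : LitAnti θ) (hψ : LitAnti ψ) (hinvψ : Invariant ψ X)
    (hid : ∀ w, ψ (θ w) = w) (h : GoodW X n w) (i : ℕ) : GoodW X n (θ^[i] w) := by
  induction i with
  | zero => simpa using h
  | succ k ih =>
    rw [Function.iterate_succ_apply']
    exact good_map hθ hψ hinvψ hid ih

lemma orbit_good {θ : List α → List α} {X : Set (List α)} {n : ℕ} {z : List α}
    (hθ : LitAnti θ) (hinv : Invariant θ X) (hgz : GoodW X n z) :
    ∀ z' ∈ OrbitZ θ z, GoodW X n z' := by
  have hg : LitAnti (Function.invFun θ) := litAnti_inv hθ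
  have hginv : Invariant (Function.invFun θ) X := invariant_inv hθ hinv
  have hg1 : Function.LeftInverse (Function.invFun θ) θ :=
    Function.leftInverse_invFun hθ.1.1
  have hg2 : Function.RightInverse (Function.invFun θ) θ :=
    Function.rightInverse_invFun hθ.1.2
  rintro z' ⟨i, hi | hi⟩
  · rw [← hi]
    exact good_iter hθ hg hginv (fun w => hg1 w) hgz i
  · have hz' : (Function.invFun θ)^[i] (θ^[i] z') = z' := (hg1.iterate i) z'
    rw [hi] at hz'
    rw [← hz']
    exact good_iter hg hθ hinv (fun w => hg2 w) hgz i

lemma window {c c' d : α} {t p s : List α} {n : ℕ} (hcc : c ≠ c')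
    (hn : n = t.length + 2)
    (h : p ++ replicate n d ++ s =
      replicate n c' ++ ([c] ++ t ++ [c']) ++ replicate n c) :
    p.length = 0 ∨ p.length = 2 * n := by
  by_contra hcon
  push_neg at hcon
  obtain ⟨h0, h2n⟩ := hcon
  have hlen := congrArg List.length h
  simp only [List.length_append, List.length_replicate, List.length_cons,
    List.length_nil] at hlen
  have hq : p.length + n ≤ 3 * n := by omega
  have hd : ∀ j, j < n →
      (replicate n c' ++ ([c] ++ t ++ [c']) ++ replicate n c)[p.length + j]? = some d := by
    intro j hj
    rw [← h, List.append_assoc,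
      List.getElem?_append_right (Nat.le_add_right p.length j),
      Nat.add_sub_cancel_left,
      List.getElem?_append_left (by simpa using hj),
      List.getElem?_replicate_of_lt hj]
  have e1 : ∀ k, k < n →
      (replicate n c' ++ ([c] ++ t ++ [c']) ++ replicate n c)[k]? = some c' := by
    intro k hk
    rw [List.getElem?_append_left
        (by simp only [List.length_append, List.length_replicate, List.length_cons,
          List.length_nil]; omega),
      List.getElem?_append_left (by simp only [List.length_replicate]; omega),
      List.getElem?_replicate_of_lt hk]
  have e2 : (replicate n c' ++ ([c] ++ t ++ [c']) ++ replicate n c)[n]? = some c := by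
    rw [List.getElem?_append_left
        (by simp only [List.length_append, List.length_replicate, List.length_cons,
          List.length_nil]; omega),
      List.getElem?_append_right (by simp only [List.length_replicate]; omega),
      List.length_replicate, Nat.sub_self]
    simp
  have e3 : (replicate n c' ++ ([c] ++ t ++ [c']) ++ replicate n c)[2*n-1]? = some c' := by
    rw [List.getElem?_append_left
        (by simp only [List.length_append, List.length_replicate, List.length_cons,
          List.length_nil]; omega),
      List.getElem?_append_right (by simp only [List.length_replicate]; omega),
      List.length_replicate,
      show 2*n-1-n = t.length + 1 by omega,
      List.append_assoc, List.singleton_append,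
      List.getElem?_cons_succ,
      List.getElem?_append_right (Nat.le_refl t.length),
      Nat.sub_self]
    simp
  have e4 : (replicate n c' ++ ([c] ++ t ++ [c']) ++ replicate n c)[2*n]? = some c := by
    rw [List.getElem?_append_right
        (by simp only [List.length_append, List.length_replicate, List.length_cons,
          List.length_nil]; omega),
      show 2*n - (replicate n c' ++ ([c] ++ t ++ [c'])).length = 0 by
        simp only [List.length_append, List.length_replicate, List.length_cons,
          List.length_nil]; omega]
    exact List.getElem?_replicate_of_lt (by omega)
  rcases le_or_gt p.length n with h1 | h1
  · have ha1 : some d = some c := by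
      have hdn := hd (n - p.length) (by omega)
      rw [show p.length + (n - p.length) = n by omega] at hdn
      exact hdn.symm.trans e2
    rcases eq_or_lt_of_le h1 with hq1 | hq1
    · have hc' : some d = some c' := by
        have hdn := hd (n - 1) (by omega)
        rw [show p.length + (n-1) = 2*n-1 by omega] at hdn
        exact hdn.symm.trans e3
      exact hcc (Option.some.inj (ha1.symm.trans hc'))
    · have hc' : some d = some c' := by
        have hdn := hd (n - 1 - p.length) (by omega)
        rw [show p.length + (n-1-p.length) = n-1 by omega] at hdn
        exact hdn.symm.trans (e1 (n-1) (by omega))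
      exact hcc (Option.some.inj (ha1.symm.trans hc'))
  · have hb1 : some d = some c' := by
      have hdn := hd (2*n - 1 - p.length) (by omega)
      rw [show p.length + (2*n-1-p.length) = 2*n-1 by omega] at hdn
      exact hdn.symm.trans e3
    have hb2 : some d = some c := by
      have hdn := hd (2*n - p.length) (by omega)
      rw [show p.length + (2*n-p.length) = 2*n by omega] at hdn
      exact hdn.symm.trans e4
    exact hcc (Option.some.inj (hb2.symm.trans hb1))

lemma align_left {p m s P S : List α} (h : p ++ m ++ s = P ++ S)
    (hle : p.length + m.length ≤ P.length) : ∃ s', p ++ m ++ s' = P := by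
  have h1 : p ++ m <+: P ++ S := ⟨s, h⟩
  have h2 : P <+: P ++ S := List.prefix_append P S
  have h3 : p ++ m <+: P :=
    List.prefix_of_prefix_length_le h1 h2 (by simpa using hle)
  obtain ⟨s', hs'⟩ := h3
  exact ⟨s', hs'⟩

lemma align_right {p m s P S : List α} (h : p ++ m ++ s = P ++ S)
    (hle : P.length ≤ p.length) :
    ∃ p', p' ++ m ++ s = S ∧ p'.length = p.length - P.length := by
  have h1 : P <+: p ++ (m ++ s) := ⟨S, by rw [← List.append_assoc]; exact h.symm ▸ rfl⟩
  have h2 : p <+: p ++ (m ++ s) := List.prefix_append p (m ++ s)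
  have h3 : P <+: p := List.prefix_of_prefix_length_le h1 h2 hle
  obtain ⟨p', rfl⟩ := h3
  refine ⟨p', ?_, by simp⟩
  have h4 : P ++ (p' ++ (m ++ s)) = P ++ S := by
    rw [← List.append_assoc, ← List.append_assoc]; exact h
  have h5 := List.append_cancel_left h4
  rw [← List.append_assoc] at h5
  exact h5

lemma factor_of_middle {p m s P w S : List α} (h : p ++ m ++ s = P ++ w ++ S)
    (h1 : P.length ≤ p.length) (h2 : p.length + m.length ≤ P.length + w.length) :
    Factor m w := by
  rw [List.append_assoc P] at h
  obtain ⟨p', hp', hlen⟩ := align_right h h1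
  obtain ⟨s', hs'⟩ := align_left hp' (by omega)
  exact ⟨p', s', hs'⟩

theorem stmt6 (θ : List α → List α) (hθ : LitAnti θ)
    (X : Set (List α)) (hcode : IsCode X) (hinv : Invariant θ X)
    (a ab : α) (ha : a ≠ ab) (x y z : List α)
    (hy : y = [a] ++ x ++ [ab]) (hyF : y ∉ Factors (StarSet X))
    (hz : z = List.replicate y.length ab ++ y ++ List.replicate y.length a) :
    ∀ u v z₁ z₂ z₃ w : List α, u ≠ [] → v ≠ [] →
      z₁ ∈ OrbitZ θ z → z₂ ∈ OrbitZ θ z → z₃ ∈ OrbitZ θ z → w ∈ StarSet X →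
      u ++ z₁ ++ v ≠ z₂ ++ w ++ z₃ := by
  intro u v z₁ z₂ z₃ w hu hv h1 h2 h3 hw heq
  set n := y.length with hny
  have hnx : n = x.length + 2 := by
    rw [hny, hy]; simp
  have hgood : GoodW X n z := by
    refine ⟨a, ab, x, ha, hnx, ?_, by rwa [← hy]⟩
    rw [hz, hy]
  have horb := orbit_good hθ hinv hgood
  obtain ⟨c₁, c₁', t₁, hcc₁, hn₁, hz₁, hm₁⟩ := horb z₁ h1
  obtain ⟨c₂, c₂', t₂, hcc₂, hn₂, hz₂, hm₂⟩ := horb z₂ h2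
  obtain ⟨c₃, c₃', t₃, hcc₃, hn₃, hz₃, hm₃⟩ := horb z₃ h3
  have hq1 : 1 ≤ u.length := List.length_pos_iff.mpr hu
  have hv1 : 1 ≤ v.length := List.length_pos_iff.mpr hv
  have hlen : u.length + (3*n) + v.length = (3*n) + w.length + (3*n) := by
    have := congrArg List.length heq
    simp only [hz₁, hz₂, hz₃, List.length_append, List.length_replicate,
      List.length_cons, List.length_nil] at this
    omega
  have hn2 : 2 ≤ n := by omega
  have heqn : u ++ (replicate n c₁' ++ (([c₁] ++ t₁ ++ [c₁']) ++ (replicate n c₁ ++ v))) =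
      z₂ ++ (w ++ z₃) := by
    simp only [hz₁, List.append_assoc] at heq ⊢
    exact heq
  by_cases hA : u.length < 2*n
  · -- prefix window into z₂
    have heq' : u ++ replicate n c₁' ++ (([c₁] ++ t₁ ++ [c₁']) ++ (replicate n c₁ ++ v)) =
        z₂ ++ (w ++ z₃) := by
      rw [List.append_assoc]; exact heqn
    obtain ⟨s', hs'⟩ := align_left heq'
      (by rw [hz₂]; simp only [List.length_append, List.length_replicate,
        List.length_cons, List.length_nil]; omega)
    rw [hz₂] at hs'
    rcases window hcc₂ hn₂ hs' with h0 | h0 <;> omega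
  · by_cases hB : n + w.length < u.length
    · -- suffix window into z₃
      have heq' : (u ++ (replicate n c₁' ++ ([c₁] ++ t₁ ++ [c₁']))) ++ replicate n c₁ ++ v =
          (z₂ ++ w) ++ z₃ := by
        have h' := heqn
        simp only [List.append_assoc] at h' ⊢
        exact h'
      obtain ⟨p', hp', hplen⟩ := align_right heq'
        (by rw [hz₂]; simp only [List.length_append, List.length_replicate,
          List.length_cons, List.length_nil]; omega)
      rw [hz₃] at hp'
      simp only [hz₂, List.length_append, List.length_replicate,
        List.length_cons, List.length_nil] at hplen
      rcases window hcc₃ hn₃ hp' with h0 | h0 <;> omega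
    · -- middle : m₁ is a factor of w
      have heq' : (u ++ replicate n c₁') ++ ([c₁] ++ t₁ ++ [c₁']) ++ (replicate n c₁ ++ v) =
          z₂ ++ w ++ z₃ := by
        have h' := heqn
        simp only [List.append_assoc] at h' ⊢
        exact h'
      have hf : Factor ([c₁] ++ t₁ ++ [c₁']) w :=
        factor_of_middle heq'
          (by rw [hz₂]; simp only [List.length_append, List.length_replicate,
            List.length_cons, List.length_nil]; omega)
          (by rw [hz₂]; simp only [List.length_append, List.length_replicate,
            List.length_cons, List.length_nil]; omega)
      exact hm₁ ⟨w, hw, hf⟩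
end

section
/- Let A be finite or countable with |A| ≥ 2, θ a bijective literal (anti)morphism on A*, and X a θ-invariant prefix code that is not complete. Then there exists a nonempty θ-invariant set Y ⊆ A⁺ disjoint from X such that X ∪ Y is still a θ-invariant prefix code; in particular X is not maximal in the family of θ-invariant prefix codes. -/
open List

variable {α : Type*}

section Stmt11Aux

lemma stmt11_nil_star (X : Set (List α)) : [] ∈ StarSet X := ⟨[], by simp, rfl⟩

lemma stmt11_mem_star {X : Set (List α)} {x : List α} (hx : x ∈ X) : x ∈ StarSet X :=
  ⟨[x], by simpa using hx, by simp⟩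

lemma stmt11_cons_star {X : Set (List α)} {x m : List α} (hx : x ∈ X) (hm : m ∈ StarSet X) :
    x ++ m ∈ StarSet X := by
  obtain ⟨l, hl, rfl⟩ := hm
  exact ⟨x :: l, fun u hu => by
    rcases List.mem_cons.mp hu with h | h
    · exact h ▸ hx
    · exact hl u h, by simp⟩

lemma stmt11_star_append {X : Set (List α)} {x m : List α} (hm : m ∈ StarSet X) (hx : x ∈ X) :
    m ++ x ∈ StarSet X := by
  obtain ⟨l, hl, rfl⟩ := hm
  exact ⟨l ++ [x], fun u hu => by
    rcases List.mem_append.mp hu with h | h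
    · exact hl u h
    · simp at h; exact h ▸ hx, by simp⟩

lemma stmt11_strip_left (X : Set (List α)) (hX : [] ∉ X) :
    ∀ n (z : List α), z.length ≤ n → (∀ m ∈ StarSet X, ¬ z <+: m) →
    ∃ v, (∀ m ∈ StarSet X, ¬ v <+: m) ∧ ∀ x ∈ X, ¬ x <+: v := by
  intro n
  induction n with
  | zero =>
    intro z hz h
    have hz0 : z = [] := List.eq_nil_of_length_eq_zero (Nat.le_zero.mp hz)
    subst hz0
    exact absurd List.prefix_rfl (h [] (stmt11_nil_star X))
  | succ n ih =>
    intro z hz h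
    by_cases hc : ∃ x ∈ X, x <+: z
    · obtain ⟨x, hxX, hp⟩ := hc
      obtain ⟨v, rfl⟩ := hp
      refine ih v ?_ ?_
      · have h1 : 0 < x.length := List.length_pos_iff.mpr (fun he => hX (he ▸ hxX))
        rw [List.length_append] at hz; omega
      · intro m hm hvm
        obtain ⟨t, rfl⟩ := hvm
        exact h (x ++ (v ++ t)) (stmt11_cons_star hxX hm) ⟨t, by simp⟩
    · exact ⟨z, h, fun x hx hp => hc ⟨x, hx, hp⟩⟩

lemma stmt11_strip_right (X : Set (List α)) (hX : [] ∉ X) :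
    ∀ n (z : List α), z.length ≤ n → (∀ m ∈ StarSet X, ¬ z <:+ m) →
    ∃ v, (∀ m ∈ StarSet X, ¬ v <:+ m) ∧ ∀ x ∈ X, ¬ x <:+ v := by
  intro n
  induction n with
  | zero =>
    intro z hz h
    have hz0 : z = [] := List.eq_nil_of_length_eq_zero (Nat.le_zero.mp hz)
    subst hz0
    exact absurd List.suffix_rfl (h [] (stmt11_nil_star X))
  | succ n ih =>
    intro z hz h
    by_cases hc : ∃ x ∈ X, x <:+ z
    · obtain ⟨x, hxX, hp⟩ := hc
      obtain ⟨v, rfl⟩ := hp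
      refine ih v ?_ ?_
      · have h1 : 0 < x.length := List.length_pos_iff.mpr (fun he => hX (he ▸ hxX))
        rw [List.length_append] at hz; omega
      · intro m hm hvm
        obtain ⟨t, rfl⟩ := hvm
        exact h ((t ++ v) ++ x) (stmt11_star_append hm hxX) ⟨t, by simp⟩
    · exact ⟨z, h, fun x hx hp => hc ⟨x, hx, hp⟩⟩

def Stmt11Incomp (X : Set (List α)) (w : List α) : Prop :=
  (∀ x ∈ X, ¬ x <+: w) ∧ (∀ x ∈ X, ¬ w <+: x) ∧ (∀ x ∈ X, ¬ x <:+ w) ∧ (∀ x ∈ X, ¬ w <:+ x)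

lemma stmt11_incomp_pres (X : Set (List α)) (φ : List α → List α)
    (hinj : Function.Injective φ) (hsurj : Function.Surjective φ)
    (hlen : ∀ u, (φ u).length = u.length)
    (hmem : ∀ x, φ x ∈ X ↔ x ∈ X)
    (hmo : IsMorphism φ ∨ IsAntimorphism φ)
    (w : List α) (hw : Stmt11Incomp X w) : Stmt11Incomp X (φ w) := by
  obtain ⟨hw1, hw2, hw3, hw4⟩ := hw
  rcases hmo with hm | ha
  · -- morphism case
    have keyP : ∀ u x, x <+: φ u → x = φ (u.take x.length) := by
      intro u x hx
      have hle : x.length ≤ u.length := by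
        have := hx.length_le; rwa [hlen] at this
      have hsplit : φ u = φ (u.take x.length) ++ φ (u.drop x.length) := by
        rw [← hm (u.take x.length) (u.drop x.length), List.take_append_drop]
      have hlt : (φ (u.take x.length)).length = x.length := by
        rw [hlen, List.length_take]; omega
      have h3 := List.prefix_iff_eq_take.mp hx
      rw [hsplit, List.take_left' hlt] at h3
      exact h3
    have keyS : ∀ u x, x <:+ φ u → x = φ (u.drop (u.length - x.length)) := by
      intro u x hx
      have hle : x.length ≤ u.length := by
        have := hx.length_le; rwa [hlen] at this
      have hsplit : φ u = φ (u.take (u.length - x.length)) ++ φ (u.drop (u.length - x.length)) := by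
        rw [← hm (u.take (u.length - x.length)) (u.drop (u.length - x.length)),
          List.take_append_drop]
      have hd : (φ (u.take (u.length - x.length))).length = u.length - x.length := by
        rw [hlen, List.length_take]; omega
      have h3 := List.suffix_iff_eq_drop.mp hx
      rw [hlen] at h3
      rw [hsplit, List.drop_left' hd] at h3
      exact h3
    refine ⟨?_, ?_, ?_, ?_⟩
    · intro x hx hp
      have h2 := keyP w x hp
      exact hw1 _ ((hmem _).mp (h2 ▸ hx)) (List.take_prefix _ _)
    · intro x hx hp
      obtain ⟨x', rfl⟩ := hsurj x
      have h2 := keyP x' (φ w) hp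
      have h3 : w = x'.take (φ w).length := hinj h2
      exact hw2 x' ((hmem _).mp hx) (h3 ▸ List.take_prefix _ _)
    · intro x hx hs
      have h2 := keyS w x hs
      exact hw3 _ ((hmem _).mp (h2 ▸ hx)) (List.drop_suffix _ _)
    · intro x hx hs
      obtain ⟨x', rfl⟩ := hsurj x
      have h2 := keyS x' (φ w) hs
      have h3 : w = x'.drop (x'.length - (φ w).length) := hinj h2
      exact hw4 x' ((hmem _).mp hx) (h3 ▸ List.drop_suffix _ _)
  · -- antimorphism case
    have keyP : ∀ u x, x <+: φ u → x = φ (u.drop (u.length - x.length)) := by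
      intro u x hx
      have hle : x.length ≤ u.length := by
        have := hx.length_le; rwa [hlen] at this
      have hsplit : φ u = φ (u.drop (u.length - x.length)) ++ φ (u.take (u.length - x.length)) := by
        rw [← ha.2 (u.take (u.length - x.length)) (u.drop (u.length - x.length)),
          List.take_append_drop]
      have hd : (φ (u.drop (u.length - x.length))).length = x.length := by
        rw [hlen, List.length_drop]; omega
      have h3 := List.prefix_iff_eq_take.mp hx
      rw [hsplit, List.take_left' hd] at h3
      exact h3
    have keyS : ∀ u x, x <:+ φ u → x = φ (u.take x.length) := by
      intro u x hx
      have hle : x.length ≤ u.length := by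
        have := hx.length_le; rwa [hlen] at this
      have hsplit : φ u = φ (u.drop x.length) ++ φ (u.take x.length) := by
        rw [← ha.2 (u.take x.length) (u.drop x.length), List.take_append_drop]
      have hd : (φ (u.drop x.length)).length = u.length - x.length := by
        rw [hlen, List.length_drop]
      have h3 := List.suffix_iff_eq_drop.mp hx
      rw [hlen] at h3
      rw [hsplit, List.drop_left' hd] at h3
      exact h3
    refine ⟨?_, ?_, ?_, ?_⟩
    · intro x hx hp
      have h2 := keyP w x hp
      exact hw3 _ ((hmem _).mp (h2 ▸ hx)) (List.drop_suffix _ _)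
    · intro x hx hp
      obtain ⟨x', rfl⟩ := hsurj x
      have h2 := keyP x' (φ w) hp
      have h3 : w = x'.drop (x'.length - (φ w).length) := hinj h2
      exact hw4 x' ((hmem _).mp hx) (h3 ▸ List.drop_suffix _ _)
    · intro x hx hs
      have h2 := keyS w x hs
      exact hw1 _ ((hmem _).mp (h2 ▸ hx)) (List.take_prefix _ _)
    · intro x hx hs
      obtain ⟨x', rfl⟩ := hsurj x
      have h2 := keyS x' (φ w) hs
      have h3 : w = x'.take (φ w).length := hinj h2
      exact hw2 x' ((hmem _).mp hx) (h3 ▸ List.take_prefix _ _)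


end Stmt11Aux

theorem stmt11 [Countable α] (hA : ∃ a b : α, a ≠ b)
    (θ : List α → List α) (hθ : LitAnti θ)
    (X : Set (List α)) (hinv : Invariant θ X) (hpre : IsPrefixCode X)
    (hnc : ¬ Complete X) :
    ∃ Y : Set (List α), Y.Nonempty ∧ [] ∉ Y ∧ Invariant θ Y ∧
      Disjoint X Y ∧ IsPrefixCode (X ∪ Y) ∧ Invariant θ (X ∪ Y) := by
  classical
  obtain ⟨hbij, hlit, hmo⟩ := hθ
  obtain ⟨g, hgl, hgr⟩ := Function.bijective_iff_has_inverse.mp hbij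
  have hinv' : θ '' X = X := hinv
  have hθnil : θ ([] : List α) = [] := by
    rcases hmo with hm | ha
    · have h := hm [] []
      rw [List.nil_append] at h
      have h3 := congrArg List.length h
      rw [List.length_append] at h3
      exact List.eq_nil_of_length_eq_zero (by omega)
    · exact ha.1
  have hlen : ∀ u : List α, (θ u).length = u.length := by
    intro u
    induction u with
    | nil => rw [hθnil]
    | cons a t ih =>
      obtain ⟨b, hb⟩ := hlit a
      rcases hmo with hm | ha
      · have h : θ (a :: t) = θ [a] ++ θ t := hm [a] t
        rw [h, hb, List.length_append, ih]
        simp only [List.length_cons, List.length_nil]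
        omega
      · have h : θ (a :: t) = θ t ++ θ [a] := ha.2 [a] t
        rw [h, hb, List.length_append, ih]
        simp only [List.length_cons, List.length_nil]
  have glen : ∀ u : List α, (g u).length = u.length := by
    intro u
    calc (g u).length = (θ (g u)).length := (hlen (g u)).symm
    _ = u.length := by rw [hgr u]
  have hmemθ : ∀ x : List α, θ x ∈ X ↔ x ∈ X := by
    intro x
    constructor
    · intro h
      rw [← hinv'] at h
      obtain ⟨x', hx', he⟩ := h
      rwa [← hbij.1 he]
    · intro h
      rw [← hinv']
      exact ⟨x, h, rfl⟩
  have hmemg : ∀ x : List α, g x ∈ X ↔ x ∈ X := by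
    intro x
    rw [← hmemθ (g x), hgr x]
  have hmog : IsMorphism g ∨ IsAntimorphism g := by
    rcases hmo with hm | ha
    · left
      intro u v
      apply hbij.1
      rw [hgr, hm, hgr, hgr]
    · right
      refine ⟨?_, ?_⟩
      · apply hbij.1
        rw [hgr, hθnil]
      · intro u v
        apply hbij.1
        rw [hgr, ha.2, hgr, hgr]
  have hz0 : ∃ z₀, z₀ ∉ Factors (StarSet X) := by
    by_contra hcon
    push_neg at hcon
    exact hnc (Set.eq_univ_of_forall hcon)
  obtain ⟨z₀, hz₀⟩ := hz0
  have hpz : ∀ m ∈ StarSet X, ¬ z₀ <+: m := by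
    rintro m hm ⟨s, rfl⟩
    exact hz₀ ⟨z₀ ++ s, hm, [], s, by simp⟩
  have hsz : ∀ m ∈ StarSet X, ¬ z₀ <:+ m := by
    rintro m hm ⟨p, rfl⟩
    exact hz₀ ⟨p ++ z₀, hm, p, [], by simp⟩
  obtain ⟨z, hz1, hz2⟩ := stmt11_strip_left X hpre.1 z₀.length z₀ le_rfl hpz
  obtain ⟨z', hz1', hz2'⟩ := stmt11_strip_right X hpre.1 z₀.length z₀ le_rfl hsz
  set w := z ++ z' with hwdef
  have hzne : z ≠ [] := by
    intro he
    exact hz1 [] (stmt11_nil_star X) (by simp [he])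
  have hwne : w ≠ [] := by
    intro he
    exact hzne (List.append_eq_nil_iff.mp he).1
  have hwinc : Stmt11Incomp X w := by
    refine ⟨?_, ?_, ?_, ?_⟩
    · intro x hx hp
      rcases List.prefix_or_prefix_of_prefix hp ⟨z', rfl⟩ with h | h
      · exact hz2 x hx h
      · exact hz1 x (stmt11_mem_star hx) h
    · intro x hx hp
      exact hz1 x (stmt11_mem_star hx) (List.IsPrefix.trans ⟨z', rfl⟩ hp)
    · intro x hx hs
      rcases List.suffix_or_suffix_of_suffix hs ⟨z, rfl⟩ with h | h
      · exact hz2' x hx h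
      · exact hz1' x (stmt11_mem_star hx) h
    · intro x hx hs
      exact hz1' x (stmt11_mem_star hx) (List.IsSuffix.trans ⟨z, rfl⟩ hs)
  have presθ := fun u => stmt11_incomp_pres X θ hbij.1 hgr.surjective hlen hmemθ hmo u
  have presg := fun u => stmt11_incomp_pres X g hgr.injective hgl.surjective glen hmemg hmog u
  have presθi : ∀ i (u : List α), Stmt11Incomp X u → Stmt11Incomp X (θ^[i] u) := by
    intro i
    induction i with
    | zero => intro u h; simpa using h
    | succ n ih =>
      intro u h
      rw [Function.iterate_succ_apply']
      exact presθ _ (ih u h)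
  have presgi : ∀ i (u : List α), Stmt11Incomp X u → Stmt11Incomp X (g^[i] u) := by
    intro i
    induction i with
    | zero => intro u h; simpa using h
    | succ n ih =>
      intro u h
      rw [Function.iterate_succ_apply']
      exact presg _ (ih u h)
  have lenθi : ∀ i (u : List α), (θ^[i] u).length = u.length := by
    intro i
    induction i with
    | zero => intro u; rfl
    | succ n ih =>
      intro u
      rw [Function.iterate_succ_apply', hlen]
      exact ih u
  have lengi : ∀ i (u : List α), (g^[i] u).length = u.length := by
    intro i
    induction i with
    | zero => intro u; rfl
    | succ n ih =>
      intro u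
      rw [Function.iterate_succ_apply', glen]
      exact ih u
  have horb : ∀ w' ∈ OrbitZ θ w, Stmt11Incomp X w' ∧ w'.length = w.length := by
    rintro w' ⟨i, hi | hi⟩
    · rw [← hi]
      exact ⟨presθi i w hwinc, lenθi i w⟩
    · have he : g^[i] w = w' := by
        rw [← hi]
        exact (hgl.iterate i) w'
      rw [← he]
      exact ⟨presgi i w hwinc, lengi i w⟩
  have hnilY : [] ∉ OrbitZ θ w := by
    intro h
    have h2 : w.length = 0 := ((horb [] h).2).symm
    exact hwne (List.eq_nil_of_length_eq_zero h2)
  have hYinv : θ '' OrbitZ θ w = OrbitZ θ w := by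
    apply Set.eq_of_subset_of_subset
    · rintro v ⟨u, ⟨i, hi | hi⟩, rfl⟩
      · exact ⟨i + 1, Or.inl (by rw [Function.iterate_succ_apply', hi])⟩
      · cases i with
        | zero =>
          simp only [Function.iterate_zero_apply] at hi
          refine ⟨1, Or.inl ?_⟩
          rw [Function.iterate_one, hi]
        | succ j =>
          rw [Function.iterate_succ_apply] at hi
          exact ⟨j, Or.inr hi⟩
    · intro v hv
      refine ⟨g v, ?_, hgr v⟩
      rcases hv with ⟨i, hi | hi⟩
      · cases i with
        | zero =>
          simp only [Function.iterate_zero_apply] at hi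
          refine ⟨1, Or.inr ?_⟩
          rw [Function.iterate_one, ← hi]
          exact hgr w
        | succ j =>
          rw [Function.iterate_succ_apply'] at hi
          refine ⟨j, Or.inl ?_⟩
          have h5 := hgl (θ^[j] w)
          rw [hi] at h5
          exact h5.symm
      · refine ⟨i + 1, Or.inr ?_⟩
        rw [Function.iterate_succ_apply, hgr v]
        exact hi
  have hdisj : Disjoint X (OrbitZ θ w) := by
    rw [Set.disjoint_left]
    intro a haX haY
    exact (horb a haY).1.1 a haX List.prefix_rfl
  have hcode : IsPrefixCode (X ∪ OrbitZ θ w) := by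
    constructor
    · rintro (h | h)
      · exact hpre.1 h
      · exact hnilY h
    · rintro p (hp | hp) u (hu | hu)
      · exact hpre.2 p hp u hu
      · exact absurd (⟨u, rfl⟩ : p <+: p ++ u) ((horb _ hu).1.1 p hp)
      · exact absurd (⟨u, rfl⟩ : p <+: p ++ u) ((horb p hp).1.2.1 _ hu)
      · have h1 := (horb p hp).2
        have h2 := (horb _ hu).2
        rw [List.length_append] at h2
        have h3 : u.length = 0 := by omega
        exact List.eq_nil_of_length_eq_zero h3
  refine ⟨OrbitZ θ w, ⟨w, 0, Or.inl rfl⟩, hnilY, hYinv, hdisj, hcode, ?_⟩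
  show θ '' (X ∪ OrbitZ θ w) = X ∪ OrbitZ θ w
  rw [Set.image_union, hinv', hYinv]
end

section
/- Let X be a θ-invariant uniformly synchronized code with verbal synchronizing delay k, where θ is a bijective literal (anti)morphism. Let M = (X^{2k}A* ∩ A*X^{2k}) ∪ X* and let X′ be the minimal generating set of the submonoid M. Then X′ is θ-invariant. -/
open List

variable {α : Type*}

section AuxStmt12

variable {φ ψ : List α → List α}

lemma aux_join_morph (hm : IsMorphism φ) (h0 : φ [] = []) :
    ∀ l : List (List α), φ l.flatten = (l.map φ).flatten := by
  intro l
  induction l with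
  | nil => simpa using h0
  | cons x l ih => simp [hm x l.flatten, ih]

lemma aux_join_anti (ha : IsAntimorphism φ) :
    ∀ l : List (List α), φ l.flatten = (l.reverse.map φ).flatten := by
  intro l
  induction l with
  | nil => simpa using ha.1
  | cons x l ih => simp [ha.2 x l.flatten, ih]

lemma aux_pow_sub (hma : IsMorphism φ ∨ IsAntimorphism φ) (h0 : φ [] = [])
    {X : Set (List α)} (hX : φ '' X ⊆ X) (n : ℕ) :
    φ '' PowSet X n ⊆ PowSet X n := by
  rintro _ ⟨w, ⟨l, hlen, hmem, hjoin⟩, rfl⟩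
  rcases hma with hm | ha
  · exact ⟨l.map φ, by simp [hlen], by
      intro u hu; rcases List.mem_map.1 hu with ⟨x, hx, rfl⟩
      exact hX ⟨x, hmem x hx, rfl⟩, by rw [← hjoin, aux_join_morph hm h0]⟩
  · exact ⟨l.reverse.map φ, by simp [hlen], by
      intro u hu; rcases List.mem_map.1 hu with ⟨x, hx, rfl⟩
      exact hX ⟨x, hmem x (List.mem_reverse.1 hx), rfl⟩,
      by rw [← hjoin, aux_join_anti ha]⟩

lemma aux_star_sub (hma : IsMorphism φ ∨ IsAntimorphism φ) (h0 : φ [] = [])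
    {X : Set (List α)} (hX : φ '' X ⊆ X) :
    φ '' StarSet X ⊆ StarSet X := by
  rintro _ ⟨w, ⟨l, hmem, hjoin⟩, rfl⟩
  rcases hma with hm | ha
  · exact ⟨l.map φ, by
      intro u hu; rcases List.mem_map.1 hu with ⟨x, hx, rfl⟩
      exact hX ⟨x, hmem x hx, rfl⟩, by rw [← hjoin, aux_join_morph hm h0]⟩
  · exact ⟨l.reverse.map φ, by
      intro u hu; rcases List.mem_map.1 hu with ⟨x, hx, rfl⟩
      exact hX ⟨x, hmem x (List.mem_reverse.1 hx), rfl⟩,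
      by rw [← hjoin, aux_join_anti ha]⟩

lemma aux_M_sub (hma : IsMorphism φ ∨ IsAntimorphism φ) (h0 : φ [] = [])
    {X : Set (List α)} (hX : φ '' X ⊆ X) (k : ℕ) :
    φ '' ({w | (∃ p ∈ PowSet X (2 * k), ∃ s, w = p ++ s) ∧
            (∃ q ∈ PowSet X (2 * k), ∃ r, w = r ++ q)} ∪ StarSet X) ⊆
      ({w | (∃ p ∈ PowSet X (2 * k), ∃ s, w = p ++ s) ∧
            (∃ q ∈ PowSet X (2 * k), ∃ r, w = r ++ q)} ∪ StarSet X) := by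
  rintro _ ⟨w, hw | hw, rfl⟩
  · obtain ⟨⟨p, hp, s, rfl⟩, ⟨q, hq, r, hw2⟩⟩ := hw
    rcases hma with hm | ha
    · refine Or.inl ⟨⟨φ p, aux_pow_sub (Or.inl hm) h0 hX _ ⟨p, hp, rfl⟩, φ s, hm p s⟩, ?_⟩
      exact ⟨φ q, aux_pow_sub (Or.inl hm) h0 hX _ ⟨q, hq, rfl⟩, φ r, by rw [hw2, hm]⟩
    · refine Or.inl ⟨⟨φ q, aux_pow_sub (Or.inr ha) h0 hX _ ⟨q, hq, rfl⟩, φ r,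
        by rw [hw2, ha.2]⟩, ?_⟩
      exact ⟨φ p, aux_pow_sub (Or.inr ha) h0 hX _ ⟨p, hp, rfl⟩, φ s, ha.2 p s⟩
  · exact Or.inr (aux_star_sub hma h0 hX ⟨w, hw, rfl⟩)

lemma aux_mingen_sub (hma : IsMorphism φ ∨ IsAntimorphism φ) (h0 : φ [] = [])
    (hpa : IsMorphism ψ ∨ IsAntimorphism ψ) (hp0 : ψ [] = [])
    (hψφ : ∀ w, ψ (φ w) = w) (hφψ : ∀ w, φ (ψ w) = w)
    {M : Set (List α)} (hφM : φ '' M ⊆ M) (hψM : ψ '' M ⊆ M) :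
    φ '' MinGen M ⊆ MinGen M := by
  rintro _ ⟨w, ⟨hwM, hwne, hdec⟩, rfl⟩
  refine ⟨hφM ⟨w, hwM, rfl⟩, ?_, ?_⟩
  · intro h
    apply hwne
    have := hψφ w
    rw [h, hp0] at this
    exact this.symm
  · rintro ⟨u, v, huM, hvM, hune, hvne, huv⟩
    have hune' : ψ u ≠ [] := fun h => hune (by rw [← hφψ u, h, h0])
    have hvne' : ψ v ≠ [] := fun h => hvne (by rw [← hφψ v, h, h0])
    rcases hpa with hm | ha
    · exact hdec ⟨ψ u, ψ v, hψM ⟨u, huM, rfl⟩, hψM ⟨v, hvM, rfl⟩, hune', hvne',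
        by rw [← hm, huv, hψφ]⟩
    · exact hdec ⟨ψ v, ψ u, hψM ⟨v, hvM, rfl⟩, hψM ⟨u, huM, rfl⟩, hvne', hune',
        by rw [← ha.2, huv, hψφ]⟩

end AuxStmt12

theorem stmt12 (θ : List α → List α) (hθ : LitAnti θ) (k : ℕ)
    (X : Set (List α)) (hinv : Invariant θ X) (hcode : IsCode X)
    (hsync : ∀ x ∈ PowSet X k, ∀ y ∈ PowSet X k, ∀ u v : List α,
      u ≠ [] → v ≠ [] → u ++ x ++ y ++ v ∈ StarSet X →
      u ++ x ∈ StarSet X ∧ x ++ v ∈ StarSet X) :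
    Invariant θ (MinGen
      ({w | (∃ p ∈ PowSet X (2 * k), ∃ s, w = p ++ s) ∧
            (∃ q ∈ PowSet X (2 * k), ∃ r, w = r ++ q)} ∪ StarSet X)) := by
  obtain ⟨hbij, hlit, hma⟩ := hθ
  set g := Function.invFun θ with hg
  have hgθ : ∀ w, g (θ w) = w := Function.leftInverse_invFun hbij.1
  have hθg : ∀ w, θ (g w) = w := Function.rightInverse_invFun hbij.2
  have h0 : θ [] = [] := by
    rcases hma with hm | ha
    · have := hm [] []
      simp only [List.append_nil] at this
      have hlen := congrArg List.length this
      simp at hlen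
      exact hlen
    · exact ha.1
  have hg0 : g [] = [] := by
    apply hbij.1
    rw [hθg, h0]
  have hgma : IsMorphism g ∨ IsAntimorphism g := by
    rcases hma with hm | ha
    · refine Or.inl fun u v => hbij.1 ?_
      rw [hθg, hm, hθg, hθg]
    · refine Or.inr ⟨hg0, fun u v => hbij.1 ?_⟩
      rw [hθg, ha.2, hθg, hθg]
  have hXsub : θ '' X ⊆ X := hinv.le
  have hgX : g '' X ⊆ X := by
    rintro _ ⟨x, hx, rfl⟩
    rw [← hinv] at hx
    rcases hx with ⟨y, hy, rfl⟩
    rwa [hgθ]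
  have hθM := aux_M_sub hma h0 hXsub k
  have hgM := aux_M_sub hgma hg0 hgX k
  apply Set.Subset.antisymm
  · exact aux_mingen_sub hma h0 hgma hg0 hgθ hθg hθM hgM
  · intro w hw
    exact ⟨g w, aux_mingen_sub hgma hg0 hma h0 hθg hgθ hgM hθM ⟨w, hw, rfl⟩, hθg w⟩
end

section
/- Let A be an alphabet with at least 3 distinct letters a, b, c satisfying a ≠ b, b ≠ c. Let y be an overlapping-free word with |y| ≥ 3 whose first two letters are both c, and let θ be an involutive antimorphism with θ(a) = b and θ(b) = a. Then the word t = a^{|y|} b θ(y) y a b^{|y|} is overlapping-free and satisfies θ(t) = t. -/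
open List

variable {α : Type*}

private lemma thetaLen (θ : List α → List α) (hlit : Literal θ)
    (hanti : IsAntimorphism θ) : ∀ w : List α, (θ w).length = w.length := by
  intro w
  induction w with
  | nil => simp [hanti.1]
  | cons x xs ih =>
    have h : θ (x :: xs) = θ xs ++ θ [x] := by
      have := hanti.2 [x] xs
      simpa using this
    obtain ⟨x', hx'⟩ := hlit x
    simp [h, hx', ih]

private lemma thetaRep (θ : List α → List α) (hanti : IsAntimorphism θ)
    (x x' : α) (hx : θ [x] = [x']) :
    ∀ k, θ (List.replicate k x) = List.replicate k x' := by
  intro k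
  induction k with
  | zero => simpa using hanti.1
  | succ k ih =>
    rw [List.replicate_succ, show (x :: List.replicate k x) = [x] ++ List.replicate k x from rfl,
      hanti.2, ih, hx, ← List.replicate_succ']

theorem stmt14 (a b c : α) (hab : a ≠ b) (hbc : b ≠ c)
    (θ : List α → List α) (hlit : Literal θ) (hanti : IsAntimorphism θ)
    (hinvol : ∀ w, θ (θ w) = w) (hθa : θ [a] = [b]) (hθb : θ [b] = [a])
    (y : List α) (hylen : 3 ≤ y.length) (hy2 : y.take 2 = [c, c])
    (hyof : OverlapFree y) :
    OverlapFree (List.replicate y.length a ++ [b] ++ θ y ++ y ++ [a] ++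
        List.replicate y.length b) ∧
      θ (List.replicate y.length a ++ [b] ++ θ y ++ y ++ [a] ++
          List.replicate y.length b) =
        List.replicate y.length a ++ [b] ++ θ y ++ y ++ [a] ++
          List.replicate y.length b := by
  have hinj : Function.Injective θ := Function.LeftInverse.injective hinvol
  have hzlen : (θ y).length = y.length := thetaLen θ hlit hanti y
  constructor
  · rintro ⟨u, v, hu, hul, heq⟩
    set n := y.length with hn
    set t := List.replicate n a ++ [b] ++ θ y ++ y ++ [a] ++ List.replicate n b with ht
    set k := u.length with hk
    have ht' : t = List.replicate n a ++ ([b] ++ (θ y ++ (y ++ ([a] ++ List.replicate n b)))) := by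
      simp [ht, List.append_assoc]
    have htlen : t.length = 4 * n + 2 := by
      simp only [ht', List.length_append, List.length_replicate, List.length_cons,
        List.length_nil, hzlen, ← hn]
      omega
    have hk1 : 1 ≤ k := List.length_pos_iff.mpr hu
    have hkt : k ≤ 4 * n + 1 := by omega
    -- pointwise facts about t
    have Fa : ∀ i, i < n → t[i]? = some a := by
      intro i hi
      rw [ht', List.getElem?_append_left (by simpa using hi), List.getElem?_replicate,
        if_pos hi]
    have hdn : t.drop n = [b] ++ (θ y ++ (y ++ ([a] ++ List.replicate n b))) := by
      rw [ht']
      exact List.drop_left' (by simp)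
    have Fb : t[n]? = some b := by
      have h := List.getElem?_drop (xs := t) (i := n) (j := 0)
      rw [hdn] at h
      simpa using h.symm
    have hd1 : t.drop (n + 1) = θ y ++ (y ++ ([a] ++ List.replicate n b)) := by
      have : t = (List.replicate n a ++ [b]) ++ (θ y ++ (y ++ ([a] ++ List.replicate n b))) := by
        simp [ht, List.append_assoc]
      rw [this]
      exact List.drop_left' (by simp)
    have Fz : ∀ i, i < n → t[n + 1 + i]? = (θ y)[i]? := by
      intro i hi
      rw [← List.getElem?_drop, hd1, List.getElem?_append_left (by rw [hzlen]; exact hi)]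
    have hd2 : t.drop (2 * n + 1) = y ++ ([a] ++ List.replicate n b) := by
      have : t = (List.replicate n a ++ [b] ++ θ y) ++ (y ++ ([a] ++ List.replicate n b)) := by
        simp [ht, List.append_assoc]
      rw [this]
      refine List.drop_left' ?_
      simp only [List.length_append, List.length_replicate, List.length_cons,
        List.length_nil, hzlen, ← hn]
      omega
    have Fy : ∀ i, i < n → t[2 * n + 1 + i]? = y[i]? := by
      intro i hi
      rw [← List.getElem?_drop, hd2, List.getElem?_append_left (by rw [← hn]; exact hi)]
    have hd3 : t.drop (3 * n + 2) = List.replicate n b := by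
      have : t = (List.replicate n a ++ [b] ++ θ y ++ y ++ [a]) ++ List.replicate n b := by
        simp [ht, List.append_assoc]
      rw [this]
      refine List.drop_left' ?_
      simp only [List.length_append, List.length_replicate, List.length_cons,
        List.length_nil, hzlen, ← hn]
      omega
    have Fb2 : ∀ i, i < n → t[3 * n + 2 + i]? = some b := by
      intro i hi
      rw [← List.getElem?_drop, hd3, List.getElem?_replicate, if_pos hi]
    -- the shift property
    have H : ∀ j, k + j < t.length → t[j]? = t[k + j]? := by
      intro j hj
      have h1 := congrArg (fun l => l[k + j]?) heq
      rw [List.getElem?_append_right (by omega : u.length ≤ k + j)] at h1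
      have e : k + j - u.length = j := by omega
      rw [e, List.getElem?_append_left hj] at h1
      exact h1
    have hn3 : 3 ≤ n := hn ▸ hylen
    -- k ≤ 3n+1
    have hk3 : k ≤ 3 * n + 1 := by
      by_contra hc
      have h0 := H 0 (by omega)
      have ha0 : t[0]? = some a := Fa 0 (by omega)
      have hb0 : t[3 * n + 2 + (k - (3 * n + 2))]? = some b := Fb2 (k - (3 * n + 2)) (by omega)
      have e : 3 * n + 2 + (k - (3 * n + 2)) = k + 0 := by omega
      rw [e] at hb0
      exact hab (Option.some.inj ((ha0.symm.trans h0).trans hb0))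
    have Ha : ∀ j, j < n → t[k + j]? = some a := by
      intro j hj
      exact (H j (by omega)).symm.trans (Fa j hj)
    -- n+1 ≤ k
    have hkn : n + 1 ≤ k := by
      by_contra hc
      have h1 := Ha (n - k) (by omega)
      have e : k + (n - k) = n := by omega
      rw [e, Fb] at h1
      exact hab (Option.some.inj h1).symm
    -- k ≤ 2n+2
    have hk22 : k ≤ 2 * n + 2 := by
      by_contra hc
      have h1 := Ha (3 * n + 2 - k) (by omega)
      have e : k + (3 * n + 2 - k) = 3 * n + 2 + 0 := by omega
      rw [e, Fb2 0 (by omega)] at h1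
      exact hab (Option.some.inj h1).symm
    have hy0 : y[0]? = some c := by
      have h := congrArg (fun l => l[0]?) hy2
      simpa [List.getElem?_take] using h
    have hy1 : y[1]? = some c := by
      have h := congrArg (fun l => l[1]?) hy2
      simpa [List.getElem?_take] using h
    by_cases hk2n : k ≤ 2 * n
    · -- a^n ends inside θ y : contradiction with b ≠ c
      set s := 2 * n + 1 - k with hs
      have hs1 : 1 ≤ s := by omega
      have hsn : s ≤ n := by omega
      have hsy : (y.take s).length = s := by
        rw [List.length_take, ← hn]; omega
      have hsplit : θ y = θ (y.drop s) ++ θ (y.take s) := by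
        conv_lhs => rw [← List.take_append_drop s y, hanti.2]
      have hdlen : (θ (y.drop s)).length = k - (n + 1) := by
        rw [thetaLen θ hlit hanti, List.length_drop, ← hn]; omega
      have hdrop : (θ y).drop (k - (n + 1)) = θ (y.take s) := by
        rw [hsplit, ← hdlen, List.drop_left]
      have key : ∀ i, i < s → (θ (y.take s))[i]? = some a := by
        intro i hi
        rw [← hdrop, List.getElem?_drop]
        have h1 := Fz (k - (n + 1) + i) (by omega)
        have e : n + 1 + (k - (n + 1) + i) = k + i := by omega
        rw [e] at h1
        rw [← h1]
        exact Ha i (by omega)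
      have hts : (θ (y.take s)).length = s := by
        rw [thetaLen θ hlit hanti]; exact hsy
      have hrep : θ (y.take s) = List.replicate s a := by
        rw [List.eq_replicate_iff]
        refine ⟨hts, fun x hx => ?_⟩
        obtain ⟨i, hi, he⟩ := List.mem_iff_getElem.mp hx
        have h := key i (by omega)
        rw [List.getElem?_eq_getElem hi, he] at h
        exact Option.some.inj h
      have htake : y.take s = List.replicate s b := by
        apply hinj
        rw [hrep, thetaRep θ hanti b a hθb s]
      have hy0' : y[0]? = some b := by
        have h := congrArg (fun l => l[0]?) htake
        simp only [List.getElem?_take, List.getElem?_replicate] at h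
        rwa [if_pos (by omega : 0 < s), if_pos (by omega : 0 < s)] at h
      exact hbc (Option.some.inj (hy0'.symm.trans hy0))
    · -- k ∈ {2n+1, 2n+2} : y = a^n, contradiction with y overlap-free
      have hya1 : ∀ j, 1 ≤ j → j < n → y[j]? = some a := by
        intro j h1 hj
        have h := Fy j hj
        have h2 := Ha (2 * n + 1 + j - k) (by omega)
        have e : k + (2 * n + 1 + j - k) = 2 * n + 1 + j := by omega
        rw [e] at h2
        rw [← h]
        exact h2
      have hca : c = a := Option.some.inj (hy1.symm.trans (hya1 1 le_rfl (by omega)))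
      have hya : ∀ j, j < n → y[j]? = some a := by
        intro j hj
        rcases Nat.eq_zero_or_pos j with h0 | h0
        · rw [h0, hy0, hca]
        · exact hya1 j h0 hj
      have hyrep : y = List.replicate n a := by
        rw [List.eq_replicate_iff]
        refine ⟨hn.symm, fun x hx => ?_⟩
        obtain ⟨i, hi, he⟩ := List.mem_iff_getElem.mp hx
        have h := hya i (by omega)
        rw [List.getElem?_eq_getElem hi, he] at h
        exact Option.some.inj h
      refine hyof ⟨[a], [a], by simp, by simp [← hn]; omega, ?_⟩
      rw [hyrep, List.singleton_append, ← List.replicate_succ, List.replicate_succ']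
  · simp only [hanti.2, hinvol, hθa, hθb, thetaRep θ hanti a b hθa,
      thetaRep θ hanti b a hθb, List.append_assoc]
end
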